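/- arXiv:1108.1756 — 8 statements merged into one kernel-verified Lean document; each statement's English description precedes it below -/
import Mathlib

section
/- Let m ≥ n ≥ 1 be integers and set β = m/n. Let A ⊆ ℝ^m be bounded and let f : A → ℝ^n be locally C^{0,β} at every x ∈ A with a constant M < ∞ independent of x (the radius may depend on x). Then μ_n(f(A)) ≤ C · M^n · μ_m(A), where C < ∞ is a constant depending only on n and m. -/
open MeasureTheory Metric ENNReal

/-- If `A ⊆ ℝᵐ` is bounded (`m ≥ n ≥ 1`) and `f : A → ℝⁿ` is locally
`C^{0,β}` at every point of `A` with exponent `β = m/n` and a constant `M` independent of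
the point (the radius may depend on the point), then `μ_n(f '' A) ≤ C * Mⁿ * μ_m(A)` where
`C < ∞` depends only on `n` and `m`. -/
theorem holder_measure_change (n m : ℕ) (hn : 1 ≤ n) (hnm : n ≤ m) :
    ∃ C : ℝ≥0∞, C ≠ ⊤ ∧
      ∀ (A : Set (EuclideanSpace ℝ (Fin m))), Bornology.IsBounded A →
        ∀ (f : EuclideanSpace ℝ (Fin m) → EuclideanSpace ℝ (Fin n)) (M : ℝ), 0 ≤ M →
          (∀ x ∈ A, ∃ r > (0 : ℝ), ∀ x' ∈ closedBall x r ∩ A,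
            ‖f x - f x'‖ ≤ M * ‖x - x'‖ ^ ((m : ℝ) / n)) →
          volume (f '' A) ≤ C * ENNReal.ofReal M ^ n * volume A := by
  have hn0 : (n : ℝ) ≠ 0 := Nat.cast_ne_zero.2 (by omega)
  set Vn : ℝ≥0∞ := volume (ball (0 : EuclideanSpace ℝ (Fin n)) 1) with hVn
  set Vm : ℝ≥0∞ := volume (ball (0 : EuclideanSpace ℝ (Fin m)) 1) with hVm
  have hVmpos : 0 < Vm := measure_ball_pos _ _ one_pos
  have hVmtop : Vm ≠ ⊤ := (measure_ball_lt_top).ne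
  have hVntop : Vn ≠ ⊤ := (measure_ball_lt_top).ne
  refine ⟨Vn * Vm⁻¹, ENNReal.mul_ne_top hVntop (ENNReal.inv_ne_top.2 hVmpos.ne'), ?_⟩
  intro A hA f M hM hf
  -- key: for every ε > 0 the bound holds with μ A + ε
  have key : ∀ ε : ℝ≥0∞, ε ≠ 0 →
      volume (f '' A) ≤ Vn * Vm⁻¹ * ENNReal.ofReal M ^ n * (volume A + ε) := by
    intro ε hε
    choose! R hRpos hR using hf
    set g : EuclideanSpace ℝ (Fin m) → Set ℝ := fun x => Set.Ioo 0 (R x) with hg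
    have hgacc : ∀ x ∈ A, ∀ δ > (0 : ℝ), (g x ∩ Set.Ioo 0 δ).Nonempty := by
      intro x hx δ hδ
      have h0 : 0 < min (R x) δ := lt_min (hRpos x hx) hδ
      refine ⟨min (R x) δ / 2, ⟨by positivity, ?_⟩, by positivity, ?_⟩
      · exact (half_lt_self h0).trans_le (min_le_left _ _)
      · exact (half_lt_self h0).trans_le (min_le_right _ _)
    obtain ⟨t, r, t_count, t_sub, hr, hcov, hsum⟩ :=
      Besicovitch.exists_closedBall_covering_tsum_measure_le volume hε g A hgacc
    -- image of each small ball piece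
    have himg : ∀ x ∈ t, f '' (closedBall x (r x) ∩ A) ⊆
        closedBall (f x) (M * r x ^ ((m : ℝ) / n)) := by
      intro x hxt y hy
      obtain ⟨x', hx', rfl⟩ := hy
      have hx'R : x' ∈ closedBall x (R x) ∩ A :=
        ⟨closedBall_subset_closedBall (hr x hxt).2.le hx'.1, hx'.2⟩
      have h1 := hR x (t_sub hxt) x' hx'R
      have h2 : ‖x - x'‖ ^ ((m : ℝ) / n) ≤ r x ^ ((m : ℝ) / n) := by
        apply Real.rpow_le_rpow (norm_nonneg _)
        · have := hx'.1
          rwa [mem_closedBall, dist_comm, dist_eq_norm] at this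
        · positivity
      rw [mem_closedBall, dist_eq_norm]
      calc ‖f x' - f x‖ = ‖f x - f x'‖ := norm_sub_rev _ _
        _ ≤ M * ‖x - x'‖ ^ ((m : ℝ) / n) := h1
        _ ≤ M * r x ^ ((m : ℝ) / n) := by nlinarith [h2, Real.rpow_nonneg (norm_nonneg (x - x')) ((m:ℝ)/n)]
    -- measure of each image piece
    have hpiece : ∀ x ∈ t, volume (f '' (closedBall x (r x) ∩ A)) ≤
        ENNReal.ofReal M ^ n * ENNReal.ofReal (r x ^ m) * Vn := by
      intro x hxt
      refine le_trans (measure_mono (himg x hxt)) ?_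
      rw [Measure.addHaar_closedBall _ _ (mul_nonneg hM (Real.rpow_nonneg (hr x hxt).1.le _))]
      have hrk : (M * r x ^ ((m : ℝ) / n)) ^ Module.finrank ℝ (EuclideanSpace ℝ (Fin n))
          = M ^ n * r x ^ m := by
        rw [finrank_euclideanSpace, Fintype.card_fin, mul_pow,
          ← Real.rpow_natCast (r x ^ ((m:ℝ)/n)) n, ← Real.rpow_mul (hr x hxt).1.le,
          div_mul_cancel₀ _ hn0, Real.rpow_natCast]
      rw [hrk, ENNReal.ofReal_mul (by positivity), ENNReal.ofReal_pow hM]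
    -- sum up
    have hball : ∀ x ∈ t, ENNReal.ofReal (r x ^ m) =
        volume (closedBall x (r x)) * Vm⁻¹ := by
      intro x hxt
      rw [Measure.addHaar_closedBall _ _ (hr x hxt).1.le, finrank_euclideanSpace,
        Fintype.card_fin, mul_assoc, ENNReal.mul_inv_cancel hVmpos.ne' hVmtop, mul_one]
    have hAcov : f '' A ⊆ ⋃ x ∈ t, f '' (closedBall x (r x) ∩ A) := by
      intro y hy
      obtain ⟨a, ha, rfl⟩ := hy
      obtain ⟨x, hx⟩ := Set.mem_iUnion₂.1 (hcov ha)
      exact Set.mem_iUnion₂.2 ⟨x, hx.1, Set.mem_image_of_mem f ⟨hx.2, ha⟩⟩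
    calc volume (f '' A) ≤ ∑' x : t, volume (f '' (closedBall x.1 (r x.1) ∩ A)) :=
          le_trans (measure_mono hAcov) (measure_biUnion_le _ t_count _)
      _ ≤ ∑' x : t, ENNReal.ofReal M ^ n * ENNReal.ofReal (r x.1 ^ m) * Vn :=
          ENNReal.tsum_le_tsum fun x => hpiece x.1 x.2
      _ = ENNReal.ofReal M ^ n * Vn * Vm⁻¹ * ∑' x : t, volume (closedBall x.1 (r x.1)) := by
          rw [← ENNReal.tsum_mul_left]
          congr 1 with x
          rw [hball x.1 x.2]; ring
      _ ≤ ENNReal.ofReal M ^ n * Vn * Vm⁻¹ * (volume A + ε) := by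
          gcongr
      _ = Vn * Vm⁻¹ * ENNReal.ofReal M ^ n * (volume A + ε) := by ring
  -- pass to the limit ε → 0
  have hμA : volume A ≠ ⊤ := hA.measure_lt_top.ne
  set K : ℝ≥0∞ := Vn * Vm⁻¹ * ENNReal.ofReal M ^ n with hK
  have hKtop : K ≠ ⊤ := by
    apply ENNReal.mul_ne_top (ENNReal.mul_ne_top hVntop (ENNReal.inv_ne_top.2 hVmpos.ne'))
    exact ENNReal.pow_ne_top ofReal_ne_top
  by_cases hK0 : K = 0
  · have h := key 1 one_ne_zero
    rw [hK0, zero_mul] at h ⊢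
    exact h
  · apply ENNReal.le_of_forall_pos_le_add
    intro δ hδ _
    calc volume (f '' A) ≤ K * (volume A + δ / K) := key _ (by
          simp [ENNReal.div_eq_zero_iff, hKtop, (by exact_mod_cast hδ.ne' : (δ:ℝ≥0∞) ≠ 0)])
      _ = K * volume A + K * (δ / K) := by rw [mul_add]
      _ = K * volume A + δ := by rw [ENNReal.mul_div_cancel hK0 hKtop]
end

section
/- Let m ≥ n ≥ 1 be integers, let D ⊆ ℝ^n be arbitrary, let f : D → ℝ^m be an arbitrary function, and set α = n/m. Then for almost every x ∈ D (i.e. outside a set of Lebesgue outer measure zero) there exists a sequence (x_k) ⊆ D \ {x} converging to x such that limsup_{k→∞} |f(x) − f(x_k)| / |x − x_k|^α < ∞. -/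
open MeasureTheory Filter Topology Set Metric
open scoped ENNReal NNReal

namespace HolderAux

noncomputable section

/-- lattice cube of side `s` at position `c` -/
def cube (n : ℕ) (s : ℝ) (c : Fin n → ℤ) : Set (EuclideanSpace ℝ (Fin n)) :=
  {x | ∀ i, (c i : ℝ) * s ≤ x i ∧ x i < ((c i : ℝ) + 1) * s}

variable {n m : ℕ}

lemma mem_cube_self {s : ℝ} (hs : 0 < s) (x : EuclideanSpace ℝ (Fin n)) :
    x ∈ cube n s (fun i => ⌊x i / s⌋) := by
  intro i
  have h1 := Int.floor_le (x i / s)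
  have h2 := Int.lt_floor_add_one (x i / s)
  constructor
  · have := mul_le_mul_of_nonneg_right h1 hs.le
    rwa [div_mul_cancel₀ _ hs.ne'] at this
  · have := mul_lt_mul_of_pos_right h2 hs
    rwa [div_mul_cancel₀ _ hs.ne'] at this

lemma cube_unique {s : ℝ} (hs : 0 < s) {c : Fin n → ℤ} {x : EuclideanSpace ℝ (Fin n)}
    (hx : x ∈ cube n s c) : c = fun i => ⌊x i / s⌋ := by
  funext i
  obtain ⟨h1, h2⟩ := hx i
  have e1 : (c i : ℝ) ≤ x i / s := by
    rw [le_div_iff₀ hs]; linarith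
  have e2 : x i / s < (c i : ℝ) + 1 := by
    rw [div_lt_iff₀ hs]; linarith
  exact ((Int.floor_eq_iff).2 ⟨e1, e2⟩).symm

lemma coord_dist_le (x y : EuclideanSpace ℝ (Fin n)) (i : Fin n) :
    dist (x i) (y i) ≤ dist x y := by
  rw [EuclideanSpace.dist_eq]
  have h1 : dist (x i) (y i) ^ 2 ≤ ∑ j, dist (x j) (y j) ^ 2 :=
    Finset.single_le_sum (f := fun j => dist (x j) (y j) ^ 2)
      (fun j _ => sq_nonneg _) (Finset.mem_univ i)
  calc dist (x i) (y i) = Real.sqrt (dist (x i) (y i) ^ 2) := (Real.sqrt_sq dist_nonneg).symm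
    _ ≤ _ := Real.sqrt_le_sqrt h1

lemma dist_le_of_mem_cube (hn : 1 ≤ n) {s : ℝ} (hs : 0 ≤ s) {c : Fin n → ℤ}
    {x y : EuclideanSpace ℝ (Fin n)}
    (hx : x ∈ cube n s c) (hy : y ∈ cube n s c) : dist x y ≤ s * n := by
  rw [EuclideanSpace.dist_eq]
  have hcoord : ∀ i, dist (x i) (y i) ^ 2 ≤ s ^ 2 := by
    intro i
    obtain ⟨hx1, hx2⟩ := hx i
    obtain ⟨hy1, hy2⟩ := hy i
    have : dist (x i) (y i) ≤ s := by
      rw [Real.dist_eq, abs_le]; constructor <;> nlinarith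
    exact pow_le_pow_left₀ dist_nonneg this 2
  have hsum : (∑ i, dist (x i) (y i) ^ 2) ≤ (n : ℝ) * s ^ 2 := by
    calc (∑ i, dist (x i) (y i) ^ 2) ≤ ∑ _i : Fin n, s ^ 2 :=
          Finset.sum_le_sum fun i _ => hcoord i
      _ = (n : ℝ) * s ^ 2 := by simp [mul_comm]
  calc Real.sqrt (∑ i, dist (x i) (y i) ^ 2) ≤ Real.sqrt ((n : ℝ) * s ^ 2) :=
        Real.sqrt_le_sqrt hsum
    _ ≤ Real.sqrt ((n : ℝ) ^ 2 * s ^ 2) := by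
        apply Real.sqrt_le_sqrt
        have h1n : (1:ℝ) ≤ (n:ℝ) := by exact_mod_cast hn
        have : (n : ℝ) ≤ (n : ℝ) ^ 2 := by nlinarith
        nlinarith [sq_nonneg s]
    _ = (n : ℝ) * s := by
        rw [← mul_pow, Real.sqrt_sq (by positivity)]
    _ = s * n := mul_comm _ _

lemma sep_of_mem_cube {s : ℝ} (hs : 0 < s) {c c' : Fin n → ℤ} (hcc : c ≠ c')
    (hpar : ∀ i, c i % 2 = c' i % 2) {x y : EuclideanSpace ℝ (Fin n)}
    (hx : x ∈ cube n s c) (hy : y ∈ cube n s c') : s ≤ dist x y := by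
  obtain ⟨i, hi⟩ : ∃ i, c i ≠ c' i := by
    by_contra h
    push_neg at h
    exact hcc (funext h)
  have h2 : c i + 2 ≤ c' i ∨ c' i + 2 ≤ c i := by
    have := hpar i
    omega
  obtain ⟨hx1, hx2⟩ := hx i
  obtain ⟨hy1, hy2⟩ := hy i
  have key : s ≤ dist (x i) (y i) := by
    rw [Real.dist_eq, le_abs]
    rcases h2 with h | h
    · right
      have : ((c i : ℝ) + 2) * s ≤ (c' i : ℝ) * s := by
        have : (c i : ℝ) + 2 ≤ (c' i : ℝ) := by exact_mod_cast h
        nlinarith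
      nlinarith
    · left
      have : ((c' i : ℝ) + 2) * s ≤ (c i : ℝ) * s := by
        have : (c' i : ℝ) + 2 ≤ (c i : ℝ) := by exact_mod_cast h
        nlinarith
      nlinarith
  exact key.trans (coord_dist_le x y i)

/-- Superadditivity of outer measure on a countable, uniformly separated family. -/
lemma tsum_measure_le_of_separated {ι : Type*} [Countable ι]
    (T : ι → Set (EuclideanSpace ℝ (Fin m))) {ε : ℝ} (hε : 0 < ε)
    (hsep : ∀ i j, i ≠ j → ∀ u ∈ T i, ∀ v ∈ T j, ε ≤ dist u v)
    {W : Set (EuclideanSpace ℝ (Fin m))} (hW : MeasurableSet W) (hTW : ∀ i, T i ⊆ W) :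
    ∑' i, volume (T i) ≤ volume W := by
  set U : ι → Set (EuclideanSpace ℝ (Fin m)) :=
    fun i => Metric.thickening (ε/2) (T i) ∩ W with hU
  have hUm : ∀ i, MeasurableSet (U i) := fun i =>
    (Metric.isOpen_thickening).measurableSet.inter hW
  have hTU : ∀ i, T i ⊆ U i := fun i =>
    subset_inter (Metric.self_subset_thickening (by linarith) _) (hTW i)
  have hdisj : Pairwise (Function.onFun Disjoint U) := by
    intro i j hij
    refine Set.disjoint_left.2 fun u hui huj => ?_
    obtain ⟨t, ht, hdt⟩ := Metric.mem_thickening_iff.1 hui.1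
    obtain ⟨t', ht', hdt'⟩ := Metric.mem_thickening_iff.1 huj.1
    have h1 := hsep i j hij t ht t' ht'
    have h2 : dist t t' ≤ dist t u + dist u t' := dist_triangle _ _ _
    rw [dist_comm t u] at h2
    linarith
  calc ∑' i, volume (T i) ≤ ∑' i, volume (U i) :=
        ENNReal.tsum_le_tsum fun i => measure_mono (hTU i)
    _ = volume (⋃ i, U i) := (measure_iUnion hdisj hUm).symm
    _ ≤ volume W := measure_mono (iUnion_subset fun i => inter_subset_right)

lemma pi_piece (hn : 1 ≤ n) (hm : 1 ≤ m)
    (F : (Fin n → ℝ) → (Fin m → ℝ)) (P : Set (Fin n → ℝ)) {C' : ℝ} (hC : 0 < C')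
    (hpair : ∀ x ∈ P, ∀ y ∈ P, C' * dist x y ^ ((n:ℝ)/m) ≤ dist (F x) (F y)) :
    volume P ≤ ENNReal.ofReal (C'⁻¹ ^ (m:ℝ)) * volume (F '' P) := by
  have hn0 : (0:ℝ) < n := by exact_mod_cast hn
  have hm0 : (0:ℝ) < m := by exact_mod_cast hm
  set α : ℝ := (n:ℝ)/m with hα
  set β : ℝ := (m:ℝ)/n with hβ
  have hαpos : 0 < α := by positivity
  have hβpos : 0 < β := by positivity
  have hαβ : α * β = 1 := by rw [hα, hβ]; field_simp
  -- injectivity on P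
  have hinj : InjOn F P := by
    intro x hx y hy hFxy
    by_contra hne
    have h1 := hpair x hx y hy
    rw [hFxy, dist_self] at h1
    have h2 : 0 < dist x y := dist_pos.2 hne
    have h3 : 0 < dist x y ^ α := Real.rpow_pos_of_pos h2 _
    nlinarith
  set g := Function.invFunOn F P with hg
  have hg1 : ∀ u ∈ F '' P, g u ∈ P ∧ F (g u) = u := by
    rintro u ⟨x, hx, rfl⟩
    exact ⟨Function.invFunOn_mem ⟨x, hx, rfl⟩, Function.invFunOn_eq ⟨x, hx, rfl⟩⟩
  have hgP : g '' (F '' P) = P := hinj.invFunOn_image (subset_refl P)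
  set K : ℝ≥0 := Real.toNNReal (C'⁻¹ ^ β) with hK
  set r : ℝ≥0 := Real.toNNReal β with hr
  have hrpos : 0 < r := Real.toNNReal_pos.2 hβpos
  have hrcoe : (r : ℝ) = β := Real.coe_toNNReal _ hβpos.le
  have hKcoe : (K : ℝ≥0∞) = ENNReal.ofReal (C'⁻¹ ^ β) := rfl
  have hold : HolderOnWith K r g (F '' P) := by
    intro u hu v hv
    obtain ⟨hgu, hFu⟩ := hg1 u hu
    obtain ⟨hgv, hFv⟩ := hg1 v hv
    have key : dist (g u) (g v) ≤ C'⁻¹ ^ β * dist u v ^ β := by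
      have h1 := hpair _ hgu _ hgv
      rw [hFu, hFv] at h1
      have h2 : dist (g u) (g v) ^ α ≤ dist u v / C' := by
        rw [le_div_iff₀ hC]; linarith
      calc dist (g u) (g v) = (dist (g u) (g v) ^ α) ^ β := by
            rw [← Real.rpow_mul dist_nonneg, hαβ, Real.rpow_one]
        _ ≤ (dist u v / C') ^ β :=
            Real.rpow_le_rpow (Real.rpow_nonneg dist_nonneg _) h2 hβpos.le
        _ = C'⁻¹ ^ β * dist u v ^ β := by
            rw [div_eq_mul_inv, Real.mul_rpow dist_nonneg (by positivity), mul_comm]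
    rw [edist_dist, edist_dist, hKcoe,
      ENNReal.ofReal_rpow_of_nonneg dist_nonneg (by rw [hrcoe]; exact hβpos.le),
      ← ENNReal.ofReal_mul (by positivity), hrcoe]
    exact ENNReal.ofReal_le_ofReal key
  have himg := hold.hausdorffMeasure_image_le hrpos (d := (n:ℝ)) hn0.le
  rw [hgP] at himg
  have hrn : (r:ℝ) * (n:ℝ) = (m:ℝ) := by rw [hrcoe, hβ, div_mul_cancel₀ _ hn0.ne']
  rw [hrn] at himg
  have hvn : (μH[(n:ℝ)] : Measure (Fin n → ℝ)) = volume := by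
    simpa using MeasureTheory.hausdorffMeasure_pi_real (ι := Fin n)
  have hvm : (μH[(m:ℝ)] : Measure (Fin m → ℝ)) = volume := by
    simpa using MeasureTheory.hausdorffMeasure_pi_real (ι := Fin m)
  rw [hvn, hvm] at himg
  refine himg.trans (le_of_eq ?_)
  congr 1
  rw [hKcoe, ENNReal.ofReal_rpow_of_nonneg (by positivity) hn0.le,
    ← Real.rpow_mul (by positivity)]
  congr 2
  rw [hβ, div_mul_cancel₀ _ hn0.ne']

lemma vol_image_equiv {k : ℕ} (S : Set (EuclideanSpace ℝ (Fin k))) :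
    volume (⇑((MeasurableEquiv.toLp 2 (Fin k → ℝ)).symm) '' S) = volume S := by
  set e := (MeasurableEquiv.toLp 2 (Fin k → ℝ)).symm
  have h := (EuclideanSpace.volume_preserving_symm_measurableEquiv_toLp (Fin k)).map_eq
  calc volume (⇑e '' S) = (Measure.map e volume) (⇑e '' S) := by rw [h]
    _ = volume (⇑e ⁻¹' (⇑e '' S)) := MeasurableEquiv.map_apply e _
    _ = volume S := by rw [Set.preimage_image_eq S e.injective]

lemma sqrt_coe_card {k : ℕ} :
    ((((Fintype.card (Fin k) : ℝ≥0)) ^ ((1:ℝ≥0∞)/2).toReal : ℝ≥0) : ℝ) = Real.sqrt k := by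
  have h2 : ((1:ℝ≥0∞)/2).toReal = (1/2 : ℝ) := by norm_num
  rw [h2]
  push_cast
  rw [Real.sqrt_eq_rpow, Fintype.card_fin]

lemma piece_bound (hn : 1 ≤ n) (hm : 1 ≤ m)
    (f : EuclideanSpace ℝ (Fin n) → EuclideanSpace ℝ (Fin m))
    (P : Set (EuclideanSpace ℝ (Fin n))) {C : ℝ} (hC : 0 < C)
    (hpair : ∀ x ∈ P, ∀ y ∈ P, C * dist x y ^ ((n:ℝ)/m) ≤ dist (f x) (f y)) :
    volume P ≤ ENNReal.ofReal ((C / Real.sqrt m)⁻¹ ^ (m:ℝ)) * volume (f '' P) := by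
  have hm0 : (0:ℝ) < m := by exact_mod_cast hm
  have hsm : (0:ℝ) < Real.sqrt m := Real.sqrt_pos.2 hm0
  set en := (MeasurableEquiv.toLp 2 (Fin n → ℝ)).symm with hen
  set em := (MeasurableEquiv.toLp 2 (Fin m → ℝ)).symm with hem
  set F : (Fin n → ℝ) → (Fin m → ℝ) := fun u => em (f (en.symm u)) with hF
  have hC' : 0 < C / Real.sqrt m := div_pos hC hsm
  -- metric comparisons
  have hlip : ∀ x y : EuclideanSpace ℝ (Fin n), dist (en x) (en y) ≤ dist x y := by
    intro x y
    have := (PiLp.lipschitzWith_ofLp 2 (fun _ : Fin n => ℝ)).dist_le_mul x y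
    simpa [hen, MeasurableEquiv.coe_toLp_symm] using this
  have hanti : ∀ a b : EuclideanSpace ℝ (Fin m),
      dist a b ≤ Real.sqrt m * dist (em a) (em b) := by
    intro a b
    have := (PiLp.antilipschitzWith_ofLp 2 (fun _ : Fin m => ℝ)).le_mul_dist a b
    rw [MeasurableEquiv.coe_toLp_symm] at *
    calc dist a b ≤ _ := this
      _ = Real.sqrt m * dist (WithLp.ofLp a) (WithLp.ofLp b) := by
          rw [sqrt_coe_card]
  have hpair' : ∀ u ∈ ⇑en '' P, ∀ v ∈ ⇑en '' P,
      (C / Real.sqrt m) * dist u v ^ ((n:ℝ)/m) ≤ dist (F u) (F v) := by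
    rintro u ⟨x, hx, rfl⟩ v ⟨y, hy, rfl⟩
    have hxu : en.symm (en x) = x := en.symm_apply_apply x
    have hyv : en.symm (en y) = y := en.symm_apply_apply y
    have h1 : dist (F (en x)) (F (en y)) = dist (em (f x)) (em (f y)) := by
      rw [hF]; simp [hxu, hyv]
    have h2 : dist (f x) (f y) ≤ Real.sqrt m * dist (em (f x)) (em (f y)) := hanti _ _
    have h3 := hpair x hx y hy
    have h4 : dist (en x) (en y) ^ ((n:ℝ)/m) ≤ dist x y ^ ((n:ℝ)/m) :=
      Real.rpow_le_rpow dist_nonneg (hlip x y) (by positivity)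
    rw [h1]
    rw [div_mul_eq_mul_div, div_le_iff₀ hsm]
    calc C * dist (en x) (en y) ^ ((n:ℝ)/m) ≤ C * dist x y ^ ((n:ℝ)/m) := by nlinarith
      _ ≤ dist (f x) (f y) := h3
      _ ≤ Real.sqrt m * dist (em (f x)) (em (f y)) := h2
      _ = dist (em (f x)) (em (f y)) * Real.sqrt m := mul_comm _ _
  have hmain := pi_piece hn hm F (⇑en '' P) hC' hpair'
  have himg : F '' (⇑en '' P) = ⇑em '' (f '' P) := by
    rw [← Set.image_comp, ← Set.image_comp]
    apply Set.image_congr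
    intro x _
    simp [hF, en.symm_apply_apply]
  rw [himg, vol_image_equiv, vol_image_equiv] at hmain
  exact hmain

def ExpSet (n m : ℕ) (D : Set (EuclideanSpace ℝ (Fin n)))
    (f : EuclideanSpace ℝ (Fin n) → EuclideanSpace ℝ (Fin m)) (C δ : ℝ) :
    Set (EuclideanSpace ℝ (Fin n)) :=
  {x | x ∈ D ∧ ∀ y ∈ D, y ≠ x → dist x y < δ →
    C * dist x y ^ ((n:ℝ)/m) ≤ dist (f x) (f y)}

lemma key_est (hn : 1 ≤ n) (hm : 1 ≤ m) (D : Set (EuclideanSpace ℝ (Fin n)))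
    (f : EuclideanSpace ℝ (Fin n) → EuclideanSpace ℝ (Fin m))
    {C δ₁ δ₂ : ℝ} (hC : 0 < C) (hδ₂ : 0 < δ₂)
    {Q : Set (EuclideanSpace ℝ (Fin n))} (hQ : ∀ x ∈ Q, ∀ y ∈ Q, dist x y < δ₁) (j : ℕ) :
    volume (ExpSet n m D f 1 δ₁ ∩ ExpSet n m D f C δ₂ ∩ Q ∩ f ⁻¹' ball 0 j) ≤
      (2^n : ℝ≥0∞) * (ENNReal.ofReal ((C / Real.sqrt m)⁻¹ ^ (m:ℝ)) *
        volume (ball (0 : EuclideanSpace ℝ (Fin m)) j)) := by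
  classical
  set α : ℝ := (n:ℝ)/m with hαdef
  have hα : 0 < α := by
    have h1 : (0:ℝ) < n := by exact_mod_cast hn
    have h2 : (0:ℝ) < m := by exact_mod_cast hm
    positivity
  set A := ExpSet n m D f 1 δ₁ ∩ ExpSet n m D f C δ₂ ∩ Q ∩ f ⁻¹' ball 0 j with hA
  set s₂ : ℝ := δ₂ / (n+1) with hs₂def
  have hs₂ : 0 < s₂ := by positivity
  have hsn : s₂ * n < δ₂ := by
    rw [hs₂def]
    rw [div_mul_eq_mul_div, div_lt_iff₀ (by positivity)]
    nlinarith
  set P : (Fin n → ℤ) → Set (EuclideanSpace ℝ (Fin n)) := fun c => A ∩ cube n s₂ c with hP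
  set par : (Fin n → ℤ) → (Fin n → Bool) := fun c i => decide (c i % 2 = 1) with hpardef
  set κ := ENNReal.ofReal ((C / Real.sqrt m)⁻¹ ^ (m:ℝ)) with hκ
  have hpc : ∀ c, ∀ x ∈ P c, ∀ y ∈ P c, C * dist x y ^ α ≤ dist (f x) (f y) := by
    intro c x hx y hy
    by_cases hxy : x = y
    · subst hxy
      simp [dist_self, Real.zero_rpow hα.ne']
    · have hxS : x ∈ ExpSet n m D f C δ₂ := hx.1.1.1.2
      have hyD : y ∈ D := hy.1.1.1.2.1
      have hd : dist x y < δ₂ := lt_of_le_of_lt (dist_le_of_mem_cube hn hs₂.le hx.2 hy.2) hsn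
      exact hxS.2 y hyD (Ne.symm hxy) hd
  have hpiece : ∀ c, volume (P c) ≤ κ * volume (f '' P c) :=
    fun c => piece_bound hn hm f (P c) hC (hpc c)
  have hclass : ∀ v : Fin n → Bool,
      (∑' c : {c // par c = v}, volume (f '' P c.1)) ≤
        volume (ball (0 : EuclideanSpace ℝ (Fin m)) j) := by
    intro v
    apply tsum_measure_le_of_separated _ (ε := s₂ ^ α) (Real.rpow_pos_of_pos hs₂ _)
    · rintro ⟨c, hc⟩ ⟨c', hc'⟩ hne u ⟨x, hx, rfl⟩ u' ⟨y, hy, rfl⟩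
      have hcc : c ≠ c' := fun h => hne (Subtype.ext h)
      have hparr : ∀ i, c i % 2 = c' i % 2 := by
        intro i
        have h := congrFun (hc.trans hc'.symm) i
        simp only [hpardef] at h
        have := decide_eq_decide.1 h
        omega
      have hxy : x ≠ y := by
        intro h
        subst h
        exact hcc ((cube_unique hs₂ hx.2).trans (cube_unique hs₂ hy.2).symm)
      have hsep := sep_of_mem_cube hs₂ hcc hparr hx.2 hy.2
      have hxQ : x ∈ Q := hx.1.1.2
      have hyQ : y ∈ Q := hy.1.1.2
      have hdist : dist x y < δ₁ := hQ x hxQ y hyQ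
      have hx1 : x ∈ ExpSet n m D f 1 δ₁ := hx.1.1.1.1
      have h1 := hx1.2 y hy.1.1.1.2.1 (Ne.symm hxy) hdist
      have h2 : s₂ ^ α ≤ dist x y ^ α := Real.rpow_le_rpow hs₂.le hsep hα.le
      calc s₂ ^ α ≤ dist x y ^ α := h2
        _ = 1 * dist x y ^ α := (one_mul _).symm
        _ ≤ dist (f x) (f y) := h1
    · exact measurableSet_ball
    · rintro ⟨c, hc⟩ u ⟨x, hx, rfl⟩
      exact hx.1.2
  have hcover : A ⊆ ⋃ v : Fin n → Bool, ⋃ c : {c // par c = v}, P c.1 := by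
    intro x hx
    exact mem_iUnion.2 ⟨par (fun i => ⌊x i / s₂⌋),
      mem_iUnion.2 ⟨⟨_, rfl⟩, hx, mem_cube_self hs₂ x⟩⟩
  calc volume A ≤ volume (⋃ v : Fin n → Bool, ⋃ c : {c // par c = v}, P c.1) :=
        measure_mono hcover
    _ ≤ ∑' v : Fin n → Bool, volume (⋃ c : {c // par c = v}, P c.1) := measure_iUnion_le _
    _ ≤ ∑' _v : Fin n → Bool,
          (κ * volume (ball (0 : EuclideanSpace ℝ (Fin m)) j)) := by
        apply ENNReal.tsum_le_tsum
        intro v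
        calc volume (⋃ c : {c // par c = v}, P c.1)
            ≤ ∑' c : {c // par c = v}, volume (P c.1) := measure_iUnion_le _
          _ ≤ ∑' c : {c // par c = v}, κ * volume (f '' P c.1) :=
              ENNReal.tsum_le_tsum fun c => hpiece c.1
          _ = κ * ∑' c : {c // par c = v}, volume (f '' P c.1) := ENNReal.tsum_mul_left
          _ ≤ κ * volume (ball (0 : EuclideanSpace ℝ (Fin m)) j) :=
              mul_le_mul_right (hclass v) κ
    _ = (2^n : ℝ≥0∞) * (κ * volume (ball (0 : EuclideanSpace ℝ (Fin m)) j)) := by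
        rw [tsum_fintype]
        rw [Finset.sum_const, nsmul_eq_mul]
        congr 1
        simp [Fintype.card_fun]

lemma G_null (hn : 1 ≤ n) (hm : 1 ≤ m) (D : Set (EuclideanSpace ℝ (Fin n)))
    (f : EuclideanSpace ℝ (Fin n) → EuclideanSpace ℝ (Fin m))
    (k₁ : ℕ) (c₁ : Fin n → ℤ) (j : ℕ) :
    volume ({x ∈ D | ∀ C : ℕ, ∃ k : ℕ, x ∈ ExpSet n m D f C (1/(k+1))}
      ∩ ExpSet n m D f 1 (1/(k₁+1)) ∩ cube n ((1/(k₁+1))/(n+1)) c₁ ∩ f ⁻¹' ball 0 j) = 0 := by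
  have hm0 : (0:ℝ) < m := by exact_mod_cast hm
  set δ₁ : ℝ := 1/(k₁+1) with hδ₁def
  have hδ₁ : 0 < δ₁ := by positivity
  set s₁ : ℝ := δ₁/(n+1) with hs₁def
  set Q := cube n s₁ c₁ with hQdef
  have hQ : ∀ x ∈ Q, ∀ y ∈ Q, dist x y < δ₁ := by
    intro x hx y hy
    have h1 : dist x y ≤ s₁ * n := dist_le_of_mem_cube hn (by positivity) hx hy
    have h2 : s₁ * n < δ₁ := by
      rw [hs₁def, div_mul_eq_mul_div, div_lt_iff₀ (by positivity)]
      nlinarith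
    linarith
  set G := {x ∈ D | ∀ C : ℕ, ∃ k : ℕ, x ∈ ExpSet n m D f C (1/(k+1))}
      ∩ ExpSet n m D f 1 δ₁ ∩ Q ∩ f ⁻¹' ball 0 j with hG
  set Vb := volume (ball (0 : EuclideanSpace ℝ (Fin m)) j) with hVb
  have hVbne : Vb ≠ ⊤ := measure_ball_lt_top.ne
  have hb : ∀ Cn : ℕ, 1 ≤ Cn →
      volume G ≤ ((2^n : ℝ≥0∞) * Vb) * ENNReal.ofReal (((Cn:ℝ) / Real.sqrt m)⁻¹ ^ (m:ℝ)) := by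
    intro Cn hCn
    have hC : (0:ℝ) < Cn := by exact_mod_cast hCn
    have hsub : G ⊆ ⋃ k₂ : ℕ, (G ∩ ExpSet n m D f Cn (1/(k₂+1))) := by
      intro x hx
      obtain ⟨k, hk⟩ := hx.1.1.1.2 Cn
      exact mem_iUnion.2 ⟨k, hx, hk⟩
    have hmono : Monotone (fun k₂ : ℕ => G ∩ ExpSet n m D f Cn (1/(k₂+1))) := by
      intro k k' hkk x hx
      refine ⟨hx.1, hx.2.1, fun y hy hyne hyd => hx.2.2 y hy hyne (lt_of_lt_of_le hyd ?_)⟩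
      apply one_div_le_one_div_of_le (by positivity)
      have : (k:ℝ) ≤ (k':ℝ) := by exact_mod_cast hkk
      linarith
    calc volume G ≤ volume (⋃ k₂ : ℕ, (G ∩ ExpSet n m D f Cn (1/(k₂+1)))) :=
          measure_mono hsub
      _ = ⨆ k₂ : ℕ, volume (G ∩ ExpSet n m D f Cn (1/((k₂:ℝ)+1))) := hmono.measure_iUnion
      _ ≤ ((2^n : ℝ≥0∞) * Vb) * ENNReal.ofReal (((Cn:ℝ) / Real.sqrt m)⁻¹ ^ (m:ℝ)) := by
          apply iSup_le
          intro k₂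
          have hδ₂ : (0:ℝ) < 1/(k₂+1) := by positivity
          have hsub2 : G ∩ ExpSet n m D f Cn (1/(k₂+1)) ⊆
              ExpSet n m D f 1 δ₁ ∩ ExpSet n m D f Cn (1/(k₂+1)) ∩ Q ∩ f ⁻¹' ball 0 j := by
            rintro x ⟨hxG, hxS⟩
            exact ⟨⟨⟨hxG.1.1.2, hxS⟩, hxG.1.2⟩, hxG.2⟩
          refine (measure_mono hsub2).trans ((key_est hn hm D f hC hδ₂ hQ j).trans
            (le_of_eq (by ring)))
  have htend : Tendsto (fun Cn : ℕ =>
      ((2^n : ℝ≥0∞) * Vb) * ENNReal.ofReal (((Cn:ℝ) / Real.sqrt m)⁻¹ ^ (m:ℝ))) atTop (𝓝 0) := by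
    have h2 : Tendsto (fun Cn : ℕ => ((Cn:ℝ) / Real.sqrt m)) atTop atTop :=
      Tendsto.atTop_div_const (Real.sqrt_pos.2 hm0) tendsto_natCast_atTop_atTop
    have h3 : Tendsto (fun Cn : ℕ => ((Cn:ℝ) / Real.sqrt m)⁻¹) atTop (𝓝 0) :=
      h2.inv_tendsto_atTop
    have h4 : Tendsto (fun Cn : ℕ => (((Cn:ℝ) / Real.sqrt m)⁻¹) ^ m) atTop (𝓝 0) := by
      have := h3.pow m
      rwa [zero_pow (by omega : m ≠ 0)] at this
    have h1 : Tendsto (fun Cn : ℕ => (((Cn:ℝ) / Real.sqrt m)⁻¹) ^ (m:ℝ)) atTop (𝓝 0) := by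
      refine h4.congr fun Cn => ?_
      rw [Real.rpow_natCast]
    have h5 := ENNReal.tendsto_ofReal h1
    rw [ENNReal.ofReal_zero] at h5
    have h6 := ENNReal.Tendsto.const_mul h5
      (Or.inr (ENNReal.mul_ne_top (by simp) hVbne) :
        (0:ℝ≥0∞) ≠ 0 ∨ ((2^n : ℝ≥0∞) * Vb) ≠ ⊤)
    simpa using h6
  have hle : volume G ≤ 0 := ge_of_tendsto htend (eventually_atTop.2 ⟨1, hb⟩)
  exact le_zero_iff.1 hle

lemma bad_null (hn : 1 ≤ n) (hm : 1 ≤ m) (D : Set (EuclideanSpace ℝ (Fin n)))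
    (f : EuclideanSpace ℝ (Fin n) → EuclideanSpace ℝ (Fin m)) :
    volume {x ∈ D | ∀ C : ℕ, ∃ k : ℕ, x ∈ ExpSet n m D f C (1/(k+1))} = 0 := by
  set Bad := {x ∈ D | ∀ C : ℕ, ∃ k : ℕ, x ∈ ExpSet n m D f C (1/(k+1))} with hBad
  have hsub : Bad ⊆ ⋃ (k₁ : ℕ) (c₁ : Fin n → ℤ) (j : ℕ),
      (Bad ∩ ExpSet n m D f 1 (1/(k₁+1)) ∩ cube n ((1/(k₁+1))/(n+1)) c₁ ∩ f ⁻¹' ball 0 j) := by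
    intro x hx
    obtain ⟨k₁, hk₁⟩ := hx.2 1
    have hk₁' : x ∈ ExpSet n m D f 1 (1/(k₁+1)) := by
      simpa using hk₁
    have hs₁ : (0:ℝ) < (1/((k₁:ℝ)+1))/((n:ℝ)+1) := by positivity
    refine mem_iUnion.2 ⟨k₁, mem_iUnion.2 ⟨fun i => ⌊x i / ((1/((k₁:ℝ)+1))/((n:ℝ)+1))⌋,
      mem_iUnion.2 ⟨⌊‖f x‖⌋₊ + 1, ⟨⟨⟨hx, hk₁'⟩, mem_cube_self hs₁ x⟩, ?_⟩⟩⟩⟩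
    rw [mem_preimage, mem_ball, dist_zero_right]
    push_cast
    exact Nat.lt_floor_add_one _
  apply measure_mono_null hsub
  exact measure_iUnion_null fun k₁ => measure_iUnion_null fun c₁ =>
    measure_iUnion_null fun j => G_null hn hm D f k₁ c₁ j

end

end HolderAux

/-- For `m ≥ n ≥ 1`, any `D ⊆ ℝⁿ` and any `f : D → ℝᵐ`, for almost every
`x ∈ D` (outside a set of Lebesgue outer measure zero) there is a sequence
`(x_k) ⊆ D \ {x}` converging to `x` with
`limsup_k |f(x) - f(x_k)| / |x - x_k|^α < ∞`, where `α = n/m`. -/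
theorem holder_sequence_ae (n m : ℕ) (hn : 1 ≤ n) (hnm : n ≤ m)
    (D : Set (EuclideanSpace ℝ (Fin n)))
    (f : EuclideanSpace ℝ (Fin n) → EuclideanSpace ℝ (Fin m)) :
    volume {x ∈ D | ¬ ∃ x_k : ℕ → EuclideanSpace ℝ (Fin n),
      (∀ k, x_k k ∈ D \ {x}) ∧ Tendsto x_k atTop (𝓝 x) ∧
      Filter.limsup (fun k =>
        ENNReal.ofReal (‖f x - f (x_k k)‖ / ‖x - x_k k‖ ^ ((n : ℝ) / m))) atTop < ⊤} = 0 := by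
  have hm : 1 ≤ m := hn.trans hnm
  apply measure_mono_null ?_ (HolderAux.bad_null hn hm D f)
  rintro x ⟨hxD, hnex⟩
  refine ⟨hxD, fun C => ?_⟩
  by_contra hnk
  push_neg at hnk
  have hstep : ∀ k : ℕ, ∃ y, y ∈ D ∧ y ≠ x ∧ dist x y < 1/(k+1) ∧
      dist (f x) (f y) < (C:ℝ) * dist x y ^ ((n:ℝ)/m) := by
    intro k
    have := hnk k
    simp only [HolderAux.ExpSet, Set.mem_setOf_eq, not_and, not_forall] at this
    obtain ⟨y, hyD, hyne, hydist, hyf⟩ := this hxD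
    exact ⟨y, hyD, hyne, hydist, lt_of_not_ge hyf⟩
  choose y hyD hyne hydist hyf using hstep
  apply hnex
  refine ⟨y, fun k => ⟨hyD k, by simp [hyne k]⟩, ?_, ?_⟩
  · rw [tendsto_iff_dist_tendsto_zero]
    apply squeeze_zero (fun k => dist_nonneg) (fun k => ?_)
      tendsto_one_div_add_atTop_nhds_zero_nat
    rw [dist_comm]
    exact (hydist k).le
  · have hb : ∀ k : ℕ, ENNReal.ofReal (‖f x - f (y k)‖ / ‖x - y k‖ ^ ((n : ℝ) / m)) ≤
        ENNReal.ofReal (C:ℝ) := by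
      intro k
      apply ENNReal.ofReal_le_ofReal
      have hpos : (0:ℝ) < ‖x - y k‖ ^ ((n : ℝ) / m) := by
        apply Real.rpow_pos_of_pos
        rw [norm_sub_pos_iff]
        exact fun h => (hyne k) h.symm
      rw [div_le_iff₀ hpos]
      have h1 : ‖f x - f (y k)‖ = dist (f x) (f (y k)) := (dist_eq_norm _ _).symm
      have h2 : ‖x - y k‖ = dist x (y k) := (dist_eq_norm _ _).symm
      rw [h1, h2]
      exact (hyf k).le
    calc Filter.limsup (fun k =>
          ENNReal.ofReal (‖f x - f (y k)‖ / ‖x - y k‖ ^ ((n : ℝ) / m))) atTop ≤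
        ENNReal.ofReal (C:ℝ) := Filter.limsup_le_of_le (by isBoundedDefault)
          (Filter.Eventually.of_forall hb)
      _ < ⊤ := ENNReal.ofReal_lt_top
end

section
/- Let m ≥ n ≥ 1 be integers, let D ⊆ ℝ^n be arbitrary, let f : D → ℝ^m be an arbitrary function, and set α = n/m. Then for almost every x ∈ D there exists a subset C ⊆ D containing x, having x as a limit point (i.e. x is an accumulation point of C \ {x}), and a constant M < ∞ such that f is uniformly C^{0,α} on C, i.e. |f(y) − f(y')| ≤ M·|y − y'|^α for all y, y' ∈ C. -/
open MeasureTheory Filter Topology Metric Set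
open scoped ENNReal NNReal

lemma holder_core_bound (n m : ℕ) (hn : 1 ≤ n) (hm : 1 ≤ m)
    (D : Set (EuclideanSpace ℝ (Fin n))) (f : EuclideanSpace ℝ (Fin n) → EuclideanSpace ℝ (Fin m))
    (S : Set (EuclideanSpace ℝ (Fin n))) (K t₀ t₁ j : ℝ)
    (hK : 1 ≤ K) (ht₁ : 0 < t₁) (ht₁1 : t₁ ≤ 1) (hj : 0 ≤ j)
    (hSD : S ⊆ D)
    (h1 : ∀ x ∈ S, ∀ y ∈ D, ‖y - x‖ ≤ t₀ → y ≠ x → ‖y - x‖ ^ ((n:ℝ)/m) ≤ ‖f y - f x‖)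
    (hKexp : ∀ x ∈ S, ∀ y ∈ D, ‖y - x‖ ≤ t₁ → y ≠ x → K * ‖y - x‖ ^ ((n:ℝ)/m) ≤ ‖f y - f x‖)
    (hdiam : ∀ x ∈ S, ∀ y ∈ S, ‖y - x‖ ≤ t₀)
    (hval : ∀ x ∈ S, ‖f x‖ ≤ j) :
    volume S ≤ volume (ball (0 : EuclideanSpace ℝ (Fin m)) (j+1)) *
      volume (ball (0 : EuclideanSpace ℝ (Fin n)) 1) * ENNReal.ofReal (4^m / K^m) /
      volume (ball (0 : EuclideanSpace ℝ (Fin m)) 1) := by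
  set α : ℝ := (n:ℝ)/m with hα
  have hn0 : (0:ℝ) < n := by exact_mod_cast hn
  have hm0 : (0:ℝ) < m := by exact_mod_cast hm
  have hα0 : 0 < α := div_pos hn0 hm0
  have hK0 : (0:ℝ) < K := lt_of_lt_of_le one_pos hK
  set δ : ℝ := t₁ ^ α / 8 with hδ
  have ht₁α : 0 < t₁ ^ α := Real.rpow_pos_of_pos ht₁ _
  have hδ0 : 0 < δ := by positivity
  have hδ1 : δ ≤ 1 := by
    have : t₁ ^ α ≤ 1 := Real.rpow_le_one ht₁.le ht₁1 hα0.le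
    rw [hδ]; linarith
  have h2K0 : (0:ℝ) < 2*K := by linarith
  set ρ : ℝ := t₁ / (2*K) ^ α⁻¹ with hρ
  have h2Kpow : (0:ℝ) < (2*K) ^ α⁻¹ := Real.rpow_pos_of_pos h2K0 _
  have hρ0 : 0 < ρ := div_pos ht₁ h2Kpow
  -- real exponent identities
  have hρn : ρ ^ n = t₁ ^ n / (2*K) ^ m := by
    rw [hρ, div_pow, ← Real.rpow_natCast ((2*K) ^ α⁻¹) n, ← Real.rpow_mul h2K0.le]
    have h1' : α⁻¹ * (n:ℝ) = (m:ℝ) := by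
      rw [hα]; field_simp
    rw [h1', Real.rpow_natCast]
  have hδm : δ ^ m = t₁ ^ n / 8 ^ m := by
    rw [hδ, div_pow, ← Real.rpow_natCast (t₁ ^ α) m, ← Real.rpow_mul ht₁.le]
    have h1' : α * (m:ℝ) = (n:ℝ) := by
      rw [hα]; field_simp
    rw [h1', Real.rpow_natCast]
  have hratio : ρ ^ n = (4^m / K^m) * δ ^ m := by
    have h8 : (8:ℝ)^m = 4^m * 2^m := by rw [← mul_pow]; norm_num
    rw [hρn, hδm, mul_pow, h8]
    have hKm : (K:ℝ)^m ≠ 0 := by positivity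
    have h2m : (2:ℝ)^m ≠ 0 := by positivity
    have h4m : (4:ℝ)^m ≠ 0 := by positivity
    field_simp
  
  -- notation
  set cX : ℝ≥0∞ := volume (ball (0 : EuclideanSpace ℝ (Fin n)) 1) with hcX
  set cY : ℝ≥0∞ := volume (ball (0 : EuclideanSpace ℝ (Fin m)) 1) with hcY
  set VY : ℝ≥0∞ := volume (ball (0 : EuclideanSpace ℝ (Fin m)) (j+1)) with hVY
  -- Zorn: maximal 2δ-separated subset of f '' S
  obtain ⟨t, htmax⟩ :
      ∃ t, Maximal (· ∈ {A : Set (EuclideanSpace ℝ (Fin m)) | A ⊆ f '' S ∧ A.Pairwise fun u v => 2*δ ≤ dist u v}) t := by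
    apply zorn_subset
    intro c hc hchain
    refine ⟨⋃₀ c, ⟨sUnion_subset fun s hs => (hc hs).1, ?_⟩, fun s hs => subset_sUnion_of_mem hs⟩
    intro u hu v hv huv
    obtain ⟨su, hsu, hu'⟩ := hu
    obtain ⟨sv, hsv, hv'⟩ := hv
    rcases hchain.total hsu hsv with h | h
    · exact (hc hsv).2 (h hu') hv' huv
    · exact (hc hsu).2 hu' (h hv') huv
  obtain ⟨htV, htsep⟩ := htmax.1
  -- cover property from maximality
  have hcover : ∀ y ∈ S, ∃ u ∈ t, dist (f y) u ≤ 2*δ := by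
    intro y hy
    by_contra hcon
    push_neg at hcon
    have hfy : f y ∉ t := by
      intro h
      have := hcon _ h
      simp only [dist_self] at this
      linarith
    have hmem : insert (f y) t ∈
        {A : Set (EuclideanSpace ℝ (Fin m)) | A ⊆ f '' S ∧ A.Pairwise fun u v => 2*δ ≤ dist u v} := by
      refine ⟨insert_subset (mem_image_of_mem f hy) htV, ?_⟩
      refine Set.pairwise_insert.2 ⟨htsep, ?_⟩
      intro v hv _
      exact ⟨(hcon v hv).le, by rw [dist_comm]; exact (hcon v hv).le⟩
    exact hfy (htmax.2 hmem (subset_insert _ _) (mem_insert _ _))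
  -- each ball around a point of t sits in the big ball
  have hball_sub : ∀ u ∈ t, ball u δ ⊆ ball (0 : EuclideanSpace ℝ (Fin m)) (j+1) := by
    intro u hu z hz
    obtain ⟨y, hyS, rfl⟩ := htV hu
    have h1' : dist z (f y) < δ := hz
    have h2' : dist (f y) 0 ≤ j := by
      rw [dist_zero_right]; exact hval y hyS
    have : dist z 0 < j + 1 := by
      calc dist z 0 ≤ dist z (f y) + dist (f y) 0 := dist_triangle _ _ _
        _ < δ + j := by linarith
        _ ≤ j + 1 := by linarith
    exact mem_ball.2 (by simpa [dist_zero_right] using this)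
  -- disjointness
  have hdisj : t.PairwiseDisjoint (fun u => ball u δ) := by
    intro u hu v hv huv
    exact ball_disjoint_ball (by have := htsep hu hv huv; linarith)
  -- volume of each small ball
  have hvball : ∀ u : EuclideanSpace ℝ (Fin m), volume (ball u δ) = ENNReal.ofReal (δ^m) * cY := by
    intro u
    rw [hcY, Measure.addHaar_ball_of_pos _ _ hδ0, finrank_euclideanSpace_fin]
  -- bound for finite subsets of t
  have hsum : ∀ s : Finset (EuclideanSpace ℝ (Fin m)), ↑s ⊆ t → (s.card : ℝ≥0∞) * (ENNReal.ofReal (δ^m) * cY) ≤ VY := by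
    intro s hs
    calc (s.card : ℝ≥0∞) * (ENNReal.ofReal (δ^m) * cY)
        = ∑ u ∈ s, volume (ball u δ) := by
          rw [Finset.sum_congr rfl fun u _ => hvball u, Finset.sum_const, nsmul_eq_mul]
      _ = volume (⋃ u ∈ s, ball u δ) := by
          refine (measure_biUnion_finset (hdisj.subset hs) fun u _ => measurableSet_ball).symm
      _ ≤ VY := measure_mono (iUnion₂_subset fun u hu => hball_sub u (hs hu))
  have hVYfin : VY ≠ ⊤ := measure_ball_lt_top.ne
  have hq0 : ENNReal.ofReal (δ^m) ≠ 0 := by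
    simp only [ne_eq, ENNReal.ofReal_eq_zero, not_le]
    positivity
  have hqtop : ENNReal.ofReal (δ^m) ≠ ⊤ := ENNReal.ofReal_ne_top
  have hcY0 : cY ≠ 0 := (measure_ball_pos _ _ one_pos).ne'
  have hcYtop : cY ≠ ⊤ := measure_ball_lt_top.ne
  have hqcY0 : ENNReal.ofReal (δ^m) * cY ≠ 0 := by
    exact mul_ne_zero hq0 hcY0
  have hqcYtop : ENNReal.ofReal (δ^m) * cY ≠ ⊤ := ENNReal.mul_ne_top hqtop hcYtop
  -- t is finite
  have htfin : t.Finite := by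
    by_contra hinf
    rw [← Set.Infinite] at hinf
    obtain ⟨N, hN⟩ := ENNReal.exists_nat_gt (r := VY / (ENNReal.ofReal (δ^m) * cY))
      (ENNReal.div_lt_top hVYfin hqcY0).ne
    obtain ⟨s, hst, hsfin, hscard⟩ := hinf.exists_subset_ncard_eq N
    have hcard : (hsfin.toFinset.card : ℝ≥0∞) = N := by
      have : hsfin.toFinset.card = N := by
        rw [← hscard, Set.ncard_eq_toFinset_card s hsfin]
      exact_mod_cast this
    have := hsum hsfin.toFinset (by rwa [Set.Finite.coe_toFinset])
    rw [hcard] at this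
    have hlt : VY < (N : ℝ≥0∞) * (ENNReal.ofReal (δ^m) * cY) := by
      rwa [ENNReal.div_lt_iff (Or.inl hqcY0) (Or.inl hqcYtop)] at hN
    exact absurd this (not_le.2 hlt)
  -- bound for each piece E_u
  have hEu : ∀ u : EuclideanSpace ℝ (Fin m), volume {y | y ∈ S ∧ dist (f y) u ≤ 2*δ} ≤ ENNReal.ofReal (ρ^n) * cX := by
    intro u
    rcases Set.eq_empty_or_nonempty {y | y ∈ S ∧ dist (f y) u ≤ 2*δ} with he | ⟨y₀, hy₀⟩
    · rw [he]; simp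
    · have hsub : {y | y ∈ S ∧ dist (f y) u ≤ 2*δ} ⊆ closedBall y₀ ρ := by
        intro y hy
        have hdf : ‖f y - f y₀‖ ≤ 4*δ := by
          rw [← dist_eq_norm]
          calc dist (f y) (f y₀) ≤ dist (f y) u + dist u (f y₀) := dist_triangle _ _ _
            _ ≤ 2*δ + 2*δ := by
                have := hy.2
                have h2 := hy₀.2
                rw [dist_comm] at h2
                linarith
            _ = 4*δ := by ring
        by_cases hyy : y = y₀
        · simp [hyy, mem_closedBall, hρ0.le]
        · have hd0 : 0 < ‖y - y₀‖ := by
            rw [norm_pos_iff, sub_ne_zero]; exact hyy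
          have hdt₀ : ‖y - y₀‖ ≤ t₀ := hdiam y₀ hy₀.1 y hy.1
          have h4δ : 4*δ = t₁^α/2 := by rw [hδ]; ring
          by_cases hdt : ‖y - y₀‖ ≤ t₁
          · have hexp := hKexp y₀ hy₀.1 y (hSD hy.1) hdt hyy
            have hdα : ‖y - y₀‖ ^ α ≤ t₁^α/(2*K) := by
              have hup : K * ‖y - y₀‖ ^ α ≤ t₁^α/2 := by rw [← h4δ]; linarith
              rw [le_div_iff₀ h2K0]
              nlinarith [Real.rpow_nonneg (norm_nonneg (y - y₀)) α]
            have hkey : ‖y - y₀‖ ≤ ρ := by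
              have e1 : ‖y - y₀‖ = (‖y - y₀‖ ^ α) ^ α⁻¹ := by
                rw [← Real.rpow_mul hd0.le, mul_inv_cancel₀ hα0.ne', Real.rpow_one]
              have e2 : (t₁^α/(2*K)) ^ α⁻¹ = ρ := by
                rw [Real.div_rpow (Real.rpow_nonneg ht₁.le _) h2K0.le,
                  ← Real.rpow_mul ht₁.le, mul_inv_cancel₀ hα0.ne', Real.rpow_one, hρ]
              calc ‖y - y₀‖ = (‖y - y₀‖ ^ α) ^ α⁻¹ := e1
                _ ≤ (t₁^α/(2*K)) ^ α⁻¹ :=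
                    Real.rpow_le_rpow (Real.rpow_nonneg (norm_nonneg _) _) hdα (inv_nonneg.2 hα0.le)
                _ = ρ := e2
            exact mem_closedBall.2 (by rwa [dist_eq_norm])
          · exfalso
            push_neg at hdt
            have hge := h1 y₀ hy₀.1 y (hSD hy.1) hdt₀ hyy
            have hlt : t₁ ^ α < ‖y - y₀‖ ^ α := Real.rpow_lt_rpow ht₁.le hdt hα0
            have : ‖y - y₀‖ ^ α ≤ t₁ ^ α / 2 := by rw [← h4δ]; linarith
            linarith
      calc volume {y | y ∈ S ∧ dist (f y) u ≤ 2*δ} ≤ volume (closedBall y₀ ρ) := measure_mono hsub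
        _ = ENNReal.ofReal (ρ^n) * cX := by
            rw [hcX, Measure.addHaar_closedBall _ _ hρ0.le, finrank_euclideanSpace_fin]
  -- total bound
  have hcover' : S ⊆ ⋃ u ∈ htfin.toFinset, {y | y ∈ S ∧ dist (f y) u ≤ 2*δ} := by
    intro y hy
    obtain ⟨u, hut, hud⟩ := hcover y hy
    exact mem_biUnion (htfin.mem_toFinset.2 hut) ⟨hy, hud⟩
  have hS1 : volume S ≤ (htfin.toFinset.card : ℝ≥0∞) * (ENNReal.ofReal (ρ^n) * cX) := by
    calc volume S ≤ volume (⋃ u ∈ htfin.toFinset, {y | y ∈ S ∧ dist (f y) u ≤ 2*δ}) :=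
          measure_mono hcover'
      _ ≤ ∑ u ∈ htfin.toFinset, volume {y | y ∈ S ∧ dist (f y) u ≤ 2*δ} :=
          measure_biUnion_finset_le _ _
      _ ≤ ∑ _u ∈ htfin.toFinset, ENNReal.ofReal (ρ^n) * cX :=
          Finset.sum_le_sum fun u _ => hEu u
      _ = (htfin.toFinset.card : ℝ≥0∞) * (ENNReal.ofReal (ρ^n) * cX) := by
          rw [Finset.sum_const, nsmul_eq_mul]
  have hcard' : (htfin.toFinset.card : ℝ≥0∞) ≤ VY / (ENNReal.ofReal (δ^m) * cY) := by
    rw [ENNReal.le_div_iff_mul_le (Or.inl hqcY0) (Or.inl hqcYtop)]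
    exact hsum htfin.toFinset (by rw [Set.Finite.coe_toFinset])
  have hfinal : volume S ≤ VY / (ENNReal.ofReal (δ^m) * cY) * (ENNReal.ofReal (ρ^n) * cX) :=
    hS1.trans (mul_le_mul_left hcard' _)
  refine hfinal.trans (le_of_eq ?_)
  have hofρ : ENNReal.ofReal (ρ^n) = ENNReal.ofReal (4^m / K^m) * ENNReal.ofReal (δ^m) := by
    rw [hratio, ENNReal.ofReal_mul (by positivity)]
  rw [hofρ, div_eq_mul_inv, ENNReal.mul_inv (Or.inl hq0) (Or.inl hqtop), div_eq_mul_inv]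
  have hcancel : ENNReal.ofReal (δ^m) * (ENNReal.ofReal (δ^m))⁻¹ = 1 :=
    ENNReal.mul_inv_cancel hq0 hqtop
  calc VY * ((ENNReal.ofReal (δ^m))⁻¹ * cY⁻¹) *
        (ENNReal.ofReal (4^m / K^m) * ENNReal.ofReal (δ^m) * cX)
      = (ENNReal.ofReal (δ^m) * (ENNReal.ofReal (δ^m))⁻¹) *
        (VY * cX * ENNReal.ofReal (4^m/K^m) * cY⁻¹) := by ring
    _ = VY * cX * ENNReal.ofReal (4^m/K^m) * cY⁻¹ := by rw [hcancel, one_mul]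

lemma holder_piece_null (n m : ℕ) (hn : 1 ≤ n) (hm : 1 ≤ m)
    (D : Set (EuclideanSpace ℝ (Fin n))) (f : EuclideanSpace ℝ (Fin n) → EuclideanSpace ℝ (Fin m))
    (T : Set (EuclideanSpace ℝ (Fin n))) (t₀ j : ℝ) (hj : 0 ≤ j)
    (hTD : T ⊆ D)
    (hT1 : ∀ x ∈ T, ∀ y ∈ D, ‖y - x‖ ≤ t₀ → y ≠ x → ‖y - x‖ ^ ((n:ℝ)/m) ≤ ‖f y - f x‖)
    (hTdiam : ∀ x ∈ T, ∀ y ∈ T, ‖y - x‖ ≤ t₀)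
    (hTval : ∀ x ∈ T, ‖f x‖ ≤ j)
    (hTbad : ∀ x ∈ T, ∀ K : ℝ, 0 < K → ∃ ε > 0, ∀ y ∈ D, ‖y - x‖ < ε → y ≠ x →
      K * ‖y - x‖ ^ ((n:ℝ)/m) < ‖f y - f x‖) :
    volume T = 0 := by
  set cY : ℝ≥0∞ := volume (ball (0 : EuclideanSpace ℝ (Fin m)) 1) with hcY
  set C0 : ℝ≥0∞ := volume (ball (0 : EuclideanSpace ℝ (Fin m)) (j+1)) *
      volume (ball (0 : EuclideanSpace ℝ (Fin n)) 1) with hC0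
  have hbound : ∀ K : ℕ, 1 ≤ K → volume T ≤ C0 * ENNReal.ofReal (4^m/(K:ℝ)^m) / cY := by
    intro K hK
    have hK1 : (1:ℝ) ≤ (K:ℝ) := by exact_mod_cast hK
    set A : ℕ → Set (EuclideanSpace ℝ (Fin n)) := fun l =>
      {x | x ∈ T ∧ ∀ y ∈ D, ‖y - x‖ ≤ 1/(l+1) → y ≠ x →
        (K:ℝ) * ‖y - x‖ ^ ((n:ℝ)/m) ≤ ‖f y - f x‖} with hA
    have hmono : Monotone A := by
      intro l l' hll x hx
      refine ⟨hx.1, fun y hy hle hne => hx.2 y hy (hle.trans ?_) hne⟩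
      have h1' : (0:ℝ) < (l:ℝ) + 1 := by positivity
      have h2' : ((l:ℝ) + 1) ≤ ((l':ℝ) + 1) := by
        have : (l:ℝ) ≤ (l':ℝ) := by exact_mod_cast hll
        linarith
      exact one_div_le_one_div_of_le h1' h2'
    have hunion : ⋃ l, A l = T := by
      apply Subset.antisymm
      · exact iUnion_subset fun l x hx => hx.1
      · intro x hx
        obtain ⟨ε, hε, hεp⟩ := hTbad x hx (K:ℝ) (by linarith)
        obtain ⟨l, hl⟩ := exists_nat_one_div_lt hε
        refine mem_iUnion.2 ⟨l, hx, fun y hy hle hne => ?_⟩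
        exact (hεp y hy (lt_of_le_of_lt hle hl) hne).le
    have hcont := hmono.measure_iUnion (μ := volume)
    rw [hunion] at hcont
    rw [hcont]
    refine iSup_le fun l => ?_
    have hl0 : (0:ℝ) < 1/((l:ℝ)+1) := by positivity
    have hl1 : 1/((l:ℝ)+1) ≤ 1 := by
      rw [div_le_one (by positivity)]
      have : (0:ℝ) ≤ (l:ℝ) := by positivity
      linarith
    exact holder_core_bound n m hn hm D f (A l) (K:ℝ) t₀ (1/((l:ℝ)+1)) j hK1 hl0 hl1 hj
      (fun x hx => hTD hx.1)
      (fun x hx => hT1 x hx.1)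
      (fun x hx y hy hle hne => hx.2 y hy hle hne)
      (fun x hx y hy => hTdiam x hx.1 y hy.1)
      (fun x hx => hTval x hx.1)
  -- let K → ∞
  have hC0top : C0 ≠ ⊤ := ENNReal.mul_ne_top measure_ball_lt_top.ne measure_ball_lt_top.ne
  have hcY0 : cY ≠ 0 := (measure_ball_pos _ _ one_pos).ne'
  have htendR : Tendsto (fun K : ℕ => (4:ℝ)^m/((K:ℝ)+1)^m) atTop (𝓝 0) := by
    have h1' : Tendsto (fun K : ℕ => ((K:ℝ)+1)) atTop atTop :=
      tendsto_atTop_add_const_right _ 1 tendsto_natCast_atTop_atTop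
    have h2' : Tendsto (fun K : ℕ => ((K:ℝ)+1)^m) atTop atTop :=
      (tendsto_pow_atTop (by omega : m ≠ 0)).comp h1'
    have h3' : Tendsto (fun K : ℕ => (((K:ℝ)+1)^m)⁻¹) atTop (𝓝 0) :=
      h2'.inv_tendsto_atTop
    have h4' := h3'.const_mul ((4:ℝ)^m)
    rw [mul_zero] at h4'
    exact h4'.congr fun K => by rw [div_eq_mul_inv]
  have htend : Tendsto (fun K : ℕ => C0 * ENNReal.ofReal ((4:ℝ)^m/((K:ℝ)+1)^m) / cY)
      atTop (𝓝 0) := by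
    have h5' : Tendsto (fun K : ℕ => ENNReal.ofReal ((4:ℝ)^m/((K:ℝ)+1)^m)) atTop (𝓝 0) := by
      have := ENNReal.tendsto_ofReal htendR
      rwa [ENNReal.ofReal_zero] at this
    have h6' : Tendsto (fun K : ℕ => C0 * ENNReal.ofReal ((4:ℝ)^m/((K:ℝ)+1)^m)) atTop (𝓝 0) := by
      have := ENNReal.Tendsto.const_mul h5' (Or.inr hC0top)
      rwa [mul_zero] at this
    have h7' := ENNReal.Tendsto.mul_const (b := cY⁻¹) h6' (Or.inr (ENNReal.inv_ne_top.2 hcY0))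
    rw [zero_mul] at h7'
    exact h7'.congr fun K => (div_eq_mul_inv _ cY).symm
  have : volume T ≤ 0 := by
    refine ge_of_tendsto' htend fun K => ?_
    have h := hbound (K+1) (by omega)
    have hcast : (((K+1 : ℕ)):ℝ) = (K:ℝ)+1 := by push_cast; ring
    rwa [hcast] at h
  exact le_zero_iff.1 this

lemma holder_bad_null (n m : ℕ) (hn : 1 ≤ n) (hm : 1 ≤ m)
    (D : Set (EuclideanSpace ℝ (Fin n))) (f : EuclideanSpace ℝ (Fin n) → EuclideanSpace ℝ (Fin m)) :
    volume {x | x ∈ D ∧ ∀ K : ℝ, 0 < K → ∃ ε > 0, ∀ y ∈ D, ‖y - x‖ < ε → y ≠ x →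
      K * ‖y - x‖ ^ ((n:ℝ)/m) < ‖f y - f x‖} = 0 := by
  set Bad := {x | x ∈ D ∧ ∀ K : ℝ, 0 < K → ∃ ε > 0, ∀ y ∈ D, ‖y - x‖ < ε → y ≠ x →
      K * ‖y - x‖ ^ ((n:ℝ)/m) < ‖f y - f x‖} with hBad
  obtain ⟨W, hWc, hWd⟩ := TopologicalSpace.exists_countable_dense (EuclideanSpace ℝ (Fin n))
  set T : ℕ → ℕ → EuclideanSpace ℝ (Fin n) → Set (EuclideanSpace ℝ (Fin n)) := fun l j w =>
    {x | x ∈ Bad ∧ (∀ y ∈ D, ‖y - x‖ ≤ 1/((l:ℝ)+1) → y ≠ x →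
        ‖y - x‖ ^ ((n:ℝ)/m) ≤ ‖f y - f x‖)
      ∧ x ∈ ball w (1/((l:ℝ)+1)/4) ∧ ‖f x‖ ≤ (j:ℝ)} with hT
  have hsub : Bad ⊆ ⋃ l, ⋃ j, ⋃ w ∈ W, T l j w := by
    intro x hx
    obtain ⟨ε, hε, hεp⟩ := hx.2 1 one_pos
    obtain ⟨l, hl⟩ := exists_nat_one_div_lt hε
    have hl4 : (0:ℝ) < 1/((l:ℝ)+1)/4 := by positivity
    obtain ⟨w, hwW, hw⟩ := hWd.exists_dist_lt x (by positivity : (0:ℝ) < 1/((l:ℝ)+1)/8)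
    simp only [mem_iUnion]
    refine ⟨l, ⌈‖f x‖⌉₊, w, hwW, hx, ?_, ?_, Nat.le_ceil _⟩
    · intro y hy hle hne
      have := hεp y hy (lt_of_le_of_lt hle hl) hne
      rw [one_mul] at this
      exact this.le
    · rw [mem_ball]
      have h8 : (1:ℝ)/((l:ℝ)+1)/8 ≤ 1/((l:ℝ)+1)/4 := by
        have h0 : (0:ℝ) < 1/((l:ℝ)+1) := by positivity
        linarith
      linarith [hw]
  refine measure_mono_null hsub ?_
  refine measure_iUnion_null fun l => measure_iUnion_null fun j => ?_
  refine (measure_biUnion_null_iff hWc).2 fun w hw => ?_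
  refine holder_piece_null n m hn hm D f (T l j w) (1/((l:ℝ)+1)) j (by positivity) ?_ ?_ ?_ ?_ ?_
  · exact fun x hx => hx.1.1
  · exact fun x hx => hx.2.1
  · intro x hx y hy
    have h1 : dist x w < 1/((l:ℝ)+1)/4 := hx.2.2.1
    have h2 : dist y w < 1/((l:ℝ)+1)/4 := hy.2.2.1
    have : dist y x < 1/((l:ℝ)+1)/2 := by
      calc dist y x ≤ dist y w + dist w x := dist_triangle _ _ _
        _ < 1/((l:ℝ)+1)/4 + 1/((l:ℝ)+1)/4 := by rw [dist_comm w x]; linarith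
        _ = 1/((l:ℝ)+1)/2 := by ring
    rw [← dist_eq_norm]
    have hl0 : (0:ℝ) < 1/((l:ℝ)+1) := by positivity
    linarith
  · exact fun x hx => hx.2.2.2
  · exact fun x hx => hx.1.2

/-- For `m ≥ n ≥ 1`, any `D ⊆ ℝⁿ` and any `f : D → ℝᵐ`, for almost every
`x ∈ D` there exist a subset `C ⊆ D` containing `x` and having `x` as an accumulation point
(`x ∈ closure (C \ {x})`), and a constant `M < ∞`, such that `f` is uniformly `C^{0,α}` on
`C` with exponent `α = n/m`. -/
theorem uniform_holder_on_subset_ae (n m : ℕ) (hn : 1 ≤ n) (hnm : n ≤ m)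
    (D : Set (EuclideanSpace ℝ (Fin n)))
    (f : EuclideanSpace ℝ (Fin n) → EuclideanSpace ℝ (Fin m)) :
    volume {x ∈ D | ¬ ∃ C ⊆ D, x ∈ C ∧ x ∈ closure (C \ {x}) ∧ ∃ M : ℝ,
      ∀ y ∈ C, ∀ y' ∈ C, ‖f y - f y'‖ ≤ M * ‖y - y'‖ ^ ((n : ℝ) / m)} = 0 := by
  have hm : 1 ≤ m := le_trans hn hnm
  set α : ℝ := (n:ℝ)/m with hα
  have hα0 : 0 < α := by
    have h1 : (0:ℝ) < n := by exact_mod_cast hn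
    have h2 : (0:ℝ) < m := by exact_mod_cast hm
    exact div_pos h1 h2
  have hα1 : α ≤ 1 := by
    have h2 : (0:ℝ) < m := by exact_mod_cast hm
    rw [hα, div_le_one h2]
    exact_mod_cast hnm
  refine measure_mono_null ?_ (holder_bad_null n m hn hm D f)
  intro x hx
  obtain ⟨hxD, hxbad⟩ := hx
  refine ⟨hxD, fun K hK => ?_⟩
  by_contra hcon
  push_neg at hcon
  have hwit : ∀ ε : ℝ, 0 < ε → ∃ y, y ∈ D ∧ ‖y - x‖ < ε ∧ y ≠ x ∧
      ‖f y - f x‖ ≤ K * ‖y - x‖ ^ α := by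
    intro ε hε
    obtain ⟨y, hyD, hylt, hyne, hyle⟩ := hcon ε hε
    exact ⟨y, hyD, hylt, hyne, hyle⟩
  have hwit' : ∀ ε : ℝ, ∃ y, 0 < ε → y ∈ D ∧ ‖y - x‖ < ε ∧ y ≠ x ∧
      ‖f y - f x‖ ≤ K * ‖y - x‖ ^ α := by
    intro ε
    by_cases hε : 0 < ε
    · obtain ⟨y, hy⟩ := hwit ε hε
      exact ⟨y, fun _ => hy⟩
    · exact ⟨x, fun h => absurd h hε⟩
  choose g hg using hwit'
  set y : ℕ → EuclideanSpace ℝ (Fin n) := fun k =>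
    Nat.rec (g 1) (fun _ p => g (‖p - x‖/2)) k with hy
  have hy0 : y 0 = g 1 := rfl
  have hystep : ∀ k, y (k+1) = g (‖y k - x‖/2) := fun k => rfl
  have hinv : ∀ k, y k ∈ D ∧ ‖y k - x‖ < (1/2)^k ∧ y k ≠ x ∧
      ‖f (y k) - f x‖ ≤ K * ‖y k - x‖ ^ α := by
    intro k
    induction k with
    | zero =>
      obtain ⟨h1, h2, h3, h4⟩ := hg 1 one_pos
      exact ⟨h1, by rw [hy0]; simpa using h2, h3, h4⟩
    | succ k ih =>
      have hpos : 0 < ‖y k - x‖/2 := by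
        have : y k - x ≠ 0 := sub_ne_zero_of_ne ih.2.2.1
        have := norm_pos_iff.2 this
        linarith
      obtain ⟨h1, h2, h3, h4⟩ := hg (‖y k - x‖/2) hpos
      rw [← hystep k] at h1 h2 h3 h4
      refine ⟨h1, ?_, h3, h4⟩
      have : ‖y k - x‖ < (1/2)^k := ih.2.1
      calc ‖y (k+1) - x‖ < ‖y k - x‖/2 := h2
        _ < (1/2)^k/2 := by linarith
        _ = (1/2)^(k+1) := by ring
  have hchain : ∀ k, ‖y (k+1) - x‖ < ‖y k - x‖/2 := by
    intro k
    have hpos : 0 < ‖y k - x‖/2 := by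
      have : y k - x ≠ 0 := sub_ne_zero_of_ne (hinv k).2.2.1
      have := norm_pos_iff.2 this
      linarith
    have := (hg (‖y k - x‖/2) hpos).2.1
    rwa [← hystep k] at this
  have hhalf : ∀ j k, j < k → ‖y k - x‖ ≤ ‖y j - x‖/2 := by
    intro j k hjk
    induction k with
    | zero => omega
    | succ k ih =>
      rcases Nat.lt_succ_iff_lt_or_eq.1 hjk with h | h
      · have h1 := ih h
        have h2 := hchain k
        have h3 : 0 ≤ ‖y j - x‖ := norm_nonneg _
        linarith
      · subst h
        exact (hchain j).le
  have htend : Tendsto y atTop (𝓝 x) := by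
    rw [tendsto_iff_dist_tendsto_zero]
    refine squeeze_zero (fun k => dist_nonneg) (fun k => ?_)
      (tendsto_pow_atTop_nhds_zero_of_lt_one (r := (1:ℝ)/2) (by norm_num) (by norm_num))
    rw [dist_eq_norm]
    exact (hinv k).2.1.le
  set C : Set (EuclideanSpace ℝ (Fin n)) := insert x (Set.range y) with hC
  have key : ∀ p q : ℕ, p < q → ‖f (y q) - f (y p)‖ ≤ 4*K*‖y q - y p‖ ^ α := by
    intro p q hpq
    have ha1 : ‖y q - x‖ ≤ ‖y p - x‖/2 := hhalf p q hpq
    have hbp : 0 < ‖y p - x‖ := norm_pos_iff.2 (sub_ne_zero_of_ne (hinv p).2.2.1)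
    have hd : ‖y p - x‖/2 ≤ ‖y q - y p‖ := by
      have h1 : ‖y p - x‖ - ‖y q - x‖ ≤ ‖(y p - x) - (y q - x)‖ := norm_sub_norm_le _ _
      have h2 : (y p - x) - (y q - x) = y p - y q := by abel
      rw [h2, norm_sub_rev (y p) (y q)] at h1
      linarith
    have htri : ‖f (y q) - f (y p)‖ ≤ ‖f (y q) - f x‖ + ‖f (y p) - f x‖ := by
      have h2 : f (y q) - f (y p) = (f (y q) - f x) - (f (y p) - f x) := by abel
      rw [h2]
      exact norm_sub_le _ _
    have hq4 := (hinv q).2.2.2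
    have hp4 := (hinv p).2.2.2
    have hmon : ‖y q - x‖ ^ α ≤ ‖y p - x‖ ^ α :=
      Real.rpow_le_rpow (norm_nonneg _) (by linarith) hα0.le
    have hstep : ‖y p - x‖ ^ α ≤ 2 * ‖y q - y p‖ ^ α := by
      have h1 : ‖y p - x‖ ≤ 2 * ‖y q - y p‖ := by linarith
      have h2 : ‖y p - x‖ ^ α ≤ (2 * ‖y q - y p‖) ^ α :=
        Real.rpow_le_rpow (norm_nonneg _) h1 hα0.le
      have h3 : (2 * ‖y q - y p‖) ^ α = 2 ^ α * ‖y q - y p‖ ^ α :=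
        Real.mul_rpow (by norm_num) (norm_nonneg _)
      have h4 : (2:ℝ) ^ α ≤ 2 := by
        calc (2:ℝ)^α ≤ 2^(1:ℝ) := Real.rpow_le_rpow_of_exponent_le one_le_two hα1
          _ = 2 := Real.rpow_one 2
      have h5 : 0 ≤ ‖y q - y p‖ ^ α := Real.rpow_nonneg (norm_nonneg _) _
      nlinarith
    have h0q : 0 ≤ ‖y q - x‖ ^ α := Real.rpow_nonneg (norm_nonneg _) _
    have h0p : 0 ≤ ‖y p - x‖ ^ α := Real.rpow_nonneg (norm_nonneg _) _
    calc ‖f (y q) - f (y p)‖ ≤ ‖f (y q) - f x‖ + ‖f (y p) - f x‖ := htri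
      _ ≤ K * ‖y q - x‖^α + K * ‖y p - x‖^α := add_le_add hq4 hp4
      _ ≤ 2*K*‖y p - x‖^α := by nlinarith
      _ ≤ 4*K*‖y q - y p‖^α := by nlinarith
  have hzero : ∀ z : EuclideanSpace ℝ (Fin n), ‖f z - f z‖ ≤ 4*K*‖z - z‖ ^ α := by
    intro z
    rw [sub_self, sub_self, norm_zero, norm_zero, Real.zero_rpow hα0.ne', mul_zero]
  have hxk : ∀ k : ℕ, ‖f (y k) - f x‖ ≤ 4*K*‖y k - x‖ ^ α := by
    intro k
    have h1 := (hinv k).2.2.2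
    have h2 : 0 ≤ ‖y k - x‖ ^ α := Real.rpow_nonneg (norm_nonneg _) _
    nlinarith
  refine hxbad ⟨C, ?_, mem_insert _ _, ?_, 4*K, ?_⟩
  · refine insert_subset_iff.2 ⟨hxD, ?_⟩
    rintro _ ⟨k, rfl⟩
    exact (hinv k).1
  · refine mem_closure_of_tendsto htend (Eventually.of_forall fun k => ?_)
    refine ⟨mem_insert_of_mem _ (mem_range_self k), ?_⟩
    simp only [mem_singleton_iff]
    exact (hinv k).2.2.1
  · intro a ha b hb
    rcases mem_insert_iff.1 ha with rfl | hpa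
    · rcases mem_insert_iff.1 hb with rfl | hpb
      · exact hzero _
      · obtain ⟨k, rfl⟩ := hpb
        have hh := hxk k
        rw [norm_sub_rev (y k), norm_sub_rev (f (y k))] at hh
        exact hh
    · obtain ⟨p, rfl⟩ := hpa
      rcases mem_insert_iff.1 hb with rfl | hpb
      · exact hxk p
      · obtain ⟨q, rfl⟩ := hpb
        rcases lt_trichotomy p q with h | h | h
        · have hh := key p q h
          rw [norm_sub_rev (f (y q)) (f (y p)), norm_sub_rev (y q) (y p)] at hh
          exact hh
        · subst h
          exact hzero (y p)
        · exact key q p h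
end

section
/- Let D ⊆ ℝ be arbitrary and f : D → ℝ an arbitrary function. Then for almost every x ∈ D there exists a sequence (x_k) ⊆ D \ {x} converging to x such that the limit lim_{k→∞} (f(x_k) − f(x))/(x_k − x) exists and is finite; that is, setting C = {x} ∪ {x_k : k ∈ ℕ}, the restriction f|_C is differentiable at x with finite derivative. -/
open MeasureTheory Filter Topology
open scoped NNReal ENNReal

/-- If `f` expands all pairs of `P` by a factor `N`, then `vol P ≤ N⁻¹ * vol (f '' P)`. -/
lemma vol_le_inv_mul_vol_image {P : Set ℝ} {f : ℝ → ℝ} {N : ℝ≥0} (hN : N ≠ 0)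
    (h : ∀ x ∈ P, ∀ y ∈ P, (N : ℝ) * |y - x| ≤ |f y - f x|) :
    volume P ≤ (N : ℝ≥0∞)⁻¹ * volume (f '' P) := by
  classical
  have Npos : (0 : ℝ) < N := by
    have := hN
    positivity
  set φ : ℝ → ℝ := fun u => if hu : ∃ x, x ∈ P ∧ f x = u then hu.choose else 0 with hφ
  have key : ∀ u ∈ f '' P, φ u ∈ P ∧ f (φ u) = u := by
    intro u hu
    obtain ⟨x, hx, hfx⟩ := hu
    have hex : ∃ x, x ∈ P ∧ f x = u := ⟨x, hx, hfx⟩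
    simp only [hφ, dif_pos hex]
    exact hex.choose_spec
  have hinj : ∀ x ∈ P, ∀ y ∈ P, f x = f y → x = y := by
    intro x hx y hy hxy
    have h1 := h x hx y hy
    rw [hxy, sub_self, abs_zero] at h1
    have : |y - x| ≤ 0 := by nlinarith [abs_nonneg (y - x)]
    have := abs_nonneg (y - x)
    have : |y - x| = 0 := le_antisymm ‹|y - x| ≤ 0› ‹0 ≤ |y - x|›
    have := abs_eq_zero.mp this
    linarith [sub_eq_zero.mp this]
  have himg : φ '' (f '' P) = P := by
    apply Set.Subset.antisymm
    · rintro z ⟨u, hu, rfl⟩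
      exact (key u hu).1
    · intro x hx
      refine ⟨f x, Set.mem_image_of_mem f hx, ?_⟩
      obtain ⟨hmem, hfeq⟩ := key (f x) (Set.mem_image_of_mem f hx)
      exact hinj _ hmem _ hx hfeq
  have hlip : LipschitzOnWith N⁻¹ φ (f '' P) := by
    rw [lipschitzOnWith_iff_dist_le_mul]
    intro u hu v hv
    obtain ⟨hu1, hu2⟩ := key u hu
    obtain ⟨hv1, hv2⟩ := key v hv
    have h1 := h (φ u) hu1 (φ v) hv1
    rw [hu2, hv2] at h1
    rw [Real.dist_eq, Real.dist_eq]
    have hc : ((N⁻¹ : ℝ≥0) : ℝ) = (N : ℝ)⁻¹ := by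
      simp
    rw [hc, abs_sub_comm u v]
    rw [abs_sub_comm (φ u)]
    have heq : |φ v - φ u| = (N : ℝ)⁻¹ * ((N : ℝ) * |φ v - φ u|) := by field_simp
    rw [heq]
    exact mul_le_mul_of_nonneg_left h1 (by positivity)
  calc volume P = volume (φ '' (f '' P)) := by rw [himg]
    _ = μH[1] (φ '' (f '' P)) := by rw [MeasureTheory.hausdorffMeasure_real]
    _ ≤ ((N⁻¹ : ℝ≥0) : ℝ≥0∞) ^ (1 : ℝ) * μH[1] (f '' P) :=
        hlip.hausdorffMeasure_image_le zero_le_one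
    _ = (N : ℝ≥0∞)⁻¹ * volume (f '' P) := by
        rw [MeasureTheory.hausdorffMeasure_real, ENNReal.rpow_one, ENNReal.coe_inv hN]

lemma sum_vol_le_of_separated {U : ℕ → Set ℝ} {F : Finset ℕ} {ε m : ℝ} (hε : 0 < ε)
    (hsub : ∀ i ∈ F, U i ⊆ Set.Icc m (m + 1))
    (hsep : ∀ i ∈ F, ∀ j ∈ F, i ≠ j → ∀ u ∈ U i, ∀ v ∈ U j, ε ≤ |u - v|) :
    ∑ i ∈ F, volume (U i) ≤ volume (Set.Icc m (m + 1)) := by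
  classical
  set G : Set ℝ := toMeasurable volume (⋃ i ∈ F, U i) with hG
  set O : ℕ → Set ℝ := fun i => ⋃ u ∈ U i, Metric.ball u (ε / 2) with hO
  have hOopen : ∀ i, IsOpen (O i) := fun i => isOpen_biUnion fun u _ => Metric.isOpen_ball
  have hUGO : ∀ i ∈ F, U i ⊆ G ∩ O i := by
    intro i hi x hx
    constructor
    · exact subset_toMeasurable _ _ (Set.mem_biUnion hi hx)
    · exact Set.mem_biUnion hx (by simp [Metric.mem_ball, hε])
  have hdisj : (F : Set ℕ).PairwiseDisjoint fun i => G ∩ O i := by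
    intro i hi j hj hij
    refine Set.disjoint_left.mpr ?_
    rintro x ⟨-, hxi⟩ ⟨-, hxj⟩
    obtain ⟨u, hu, hxu⟩ := Set.mem_iUnion₂.mp hxi
    obtain ⟨v, hv, hxv⟩ := Set.mem_iUnion₂.mp hxj
    have h1 := hsep i hi j hj hij u hu v hv
    have h2 : dist u v < ε := by
      calc dist u v ≤ dist u x + dist x v := dist_triangle u x v
        _ < ε / 2 + ε / 2 := by
            rw [Metric.mem_ball] at hxu hxv
            rw [dist_comm u x]
            linarith
        _ = ε := by ring
    rw [Real.dist_eq] at h2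
    linarith
  calc ∑ i ∈ F, volume (U i) ≤ ∑ i ∈ F, volume (G ∩ O i) :=
        Finset.sum_le_sum fun i hi => measure_mono (hUGO i hi)
    _ = volume (⋃ i ∈ F, (G ∩ O i)) :=
        (measure_biUnion_finset hdisj fun i _ =>
          (measurableSet_toMeasurable _ _).inter (hOopen i).measurableSet).symm
    _ ≤ volume G := measure_mono (Set.iUnion₂_subset fun i _ => Set.inter_subset_left)
    _ = volume (⋃ i ∈ F, U i) := measure_toMeasurable _
    _ ≤ volume (Set.Icc m (m + 1)) :=
        measure_mono (Set.iUnion₂_subset fun i hi => hsub i hi)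

lemma cover_windows {E : Set ℝ} {w δ : ℝ} (hδ : 0 < δ) (n : ℕ)
    (hE : E ⊆ Set.Ico w (w + n * δ)) :
    volume E ≤ ∑ i ∈ Finset.range n,
      volume (E ∩ Set.Ico (w + i * δ) (w + (i + 1) * δ)) := by
  have hcover : E ⊆ ⋃ i ∈ Finset.range n, (E ∩ Set.Ico (w + i * δ) (w + (i + 1) * δ)) := by
    intro x hx
    obtain ⟨hx1, hx2⟩ := hE hx
    set t : ℝ := (x - w) / δ with ht
    have ht0 : 0 ≤ t := div_nonneg (by linarith) hδ.le
    have htn : t < n := (div_lt_iff₀ hδ).mpr (by linarith)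
    set i : ℕ := ⌊t⌋₊ with hi
    have hin : i < n := by
      have := Nat.floor_lt ht0 |>.mpr htn
      exact_mod_cast this
    refine Set.mem_biUnion (Finset.mem_range.mpr hin) ⟨hx, ?_, ?_⟩
    · have h1 : (i : ℝ) ≤ t := Nat.floor_le ht0
      have : (i : ℝ) * δ ≤ t * δ := mul_le_mul_of_nonneg_right h1 hδ.le
      rw [ht] at this
      rw [div_mul_cancel₀ _ (ne_of_gt hδ)] at this
      linarith
    · have h2 : t < i + 1 := Nat.lt_floor_add_one t
      have : t * δ < ((i : ℝ) + 1) * δ := mul_lt_mul_of_pos_right h2 hδ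
      rw [ht, div_mul_cancel₀ _ (ne_of_gt hδ)] at this
      linarith
  calc volume E ≤ volume (⋃ i ∈ Finset.range n, (E ∩ Set.Ico (w + i * δ) (w + (i + 1) * δ))) :=
        measure_mono hcover
    _ ≤ ∑ i ∈ Finset.range n, volume (E ∩ Set.Ico (w + i * δ) (w + (i + 1) * δ)) :=
        measure_biUnion_finset_le _ _

/-- The main measure-theoretic lemma: a set on which the difference quotients of `f`
blow up uniformly at every point, contained in a unit interval and with image in a unit
interval, is Lebesgue null. -/
lemma slice_null {T : Set ℝ} {f : ℝ → ℝ} {p m : ℝ}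
    (hT : T ⊆ Set.Ico p (p + 1)) (hfT : ∀ x ∈ T, f x ∈ Set.Icc m (m + 1))
    (hP : ∀ x ∈ T, ∀ N : ℕ, ∃ δ > (0 : ℝ), ∀ y ∈ T, |y - x| < δ →
      (N : ℝ) * |y - x| ≤ |f y - f x|) :
    volume T = 0 := by
  classical
  by_contra hc0
  have hcfin : volume T ≤ 1 := by
    calc volume T ≤ volume (Set.Ico p (p + 1)) := measure_mono hT
      _ = 1 := by simp
  have hctop : volume T ≠ ⊤ := ne_top_of_le_ne_top ENNReal.one_ne_top hcfin
  -- the sets where the expansion by factor N holds at scale 1/(q+1)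
  set S : ℕ → ℕ → Set ℝ := fun N q =>
    {x | x ∈ T ∧ ∀ y ∈ T, |y - x| < 1 / (q + 1) → (N : ℝ) * |y - x| ≤ |f y - f x|} with hS
  have hSsub : ∀ N q, S N q ⊆ T := fun N q x hx => hx.1
  have hSmono : ∀ N, Monotone (S N) := by
    intro N q q' hqq x hx
    refine ⟨hx.1, fun y hy hclose => hx.2 y hy (lt_of_lt_of_le hclose ?_)⟩
    apply one_div_le_one_div_of_le
    · positivity
    · have : (q : ℝ) ≤ q' := by exact_mod_cast hqq
      linarith
  have hSunion : ∀ N, T = ⋃ q, S N q := by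
    intro N
    apply Set.Subset.antisymm
    · intro x hx
      obtain ⟨δ, hδ, hδ'⟩ := hP x hx N
      obtain ⟨q, hq⟩ := exists_nat_one_div_lt hδ
      exact Set.mem_iUnion.mpr ⟨q, hx, fun y hy hclose => hδ' y hy (hclose.trans hq)⟩
    · exact Set.iUnion_subset fun q => hSsub N q
  have hSsup : ∀ N, (⨆ q, volume (S N q)) = volume T := by
    intro N
    rw [← (hSmono N).measure_iUnion, ← hSunion N]
  -- Stage 1: find a scale q₁ and a window of length δ₁ where S 1 q₁ has positive measure
  obtain ⟨q₁, hq₁⟩ : ∃ q, volume (S 1 q) ≠ 0 := by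
    by_contra hcon
    push_neg at hcon
    apply hc0
    rw [← hSsup 1]
    simp [hcon]
  set δ₁ : ℝ := 1 / (q₁ + 1) with hδ₁
  have hδ₁pos : 0 < δ₁ := by positivity
  have hδ₁le : δ₁ ≤ 1 := by
    rw [hδ₁]
    rw [div_le_one (by positivity)]
    have : (0:ℝ) ≤ (q₁ : ℝ) := Nat.cast_nonneg q₁
    linarith
  have hq₁δ : ((q₁ : ℝ) + 1) * δ₁ = 1 := by
    rw [hδ₁]
    field_simp
  have hcov1 : volume (S 1 q₁) ≤ ∑ j ∈ Finset.range (q₁ + 1),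
      volume (S 1 q₁ ∩ Set.Ico (p + j * δ₁) (p + (j + 1) * δ₁)) := by
    apply cover_windows hδ₁pos
    intro x hx
    have hx' := hT (hSsub 1 q₁ hx)
    have : (((q₁ + 1 : ℕ)) : ℝ) * δ₁ = 1 := by
      push_cast
      exact hq₁δ
    rw [this]
    exact hx'
  obtain ⟨j, -, hj⟩ : ∃ j ∈ Finset.range (q₁ + 1),
      volume (S 1 q₁ ∩ Set.Ico (p + j * δ₁) (p + (j + 1) * δ₁)) ≠ 0 := by
    by_contra hcon
    push_neg at hcon
    apply hq₁
    refine le_antisymm ?_ zero_le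
    calc volume (S 1 q₁) ≤ _ := hcov1
      _ = 0 := Finset.sum_eq_zero hcon
  set w : ℝ := p + j * δ₁ with hw
  set B : Set ℝ := S 1 q₁ ∩ Set.Ico w (w + δ₁) with hB
  have hBeq : S 1 q₁ ∩ Set.Ico (p + j * δ₁) (p + (j + 1) * δ₁) = B := by
    rw [hB, hw]
    congr 2
    ring
  set b : ℝ≥0∞ := volume B with hb
  have hb0 : b ≠ 0 := by
    rw [hb, ← hBeq]
    exact hj
  have hbtop : b ≠ ⊤ := by
    intro h
    apply hctop
    refine le_antisymm le_top ?_
    calc (⊤ : ℝ≥0∞) = b := h.symm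
      _ ≤ volume T := measure_mono (fun x hx => hSsub 1 q₁ hx.1)
  -- choose the expansion factor n
  obtain ⟨n, hn⟩ : ∃ n : ℕ, (n : ℝ≥0∞)⁻¹ < b / 4 :=
    ENNReal.exists_inv_nat_lt (by simp [ENNReal.div_eq_zero_iff, hb0])
  have hn0 : n ≠ 0 := by
    intro h
    rw [h] at hn
    simp only [Nat.cast_zero, ENNReal.inv_zero] at hn
    exact (not_lt.mpr le_top) hn
  -- Stage 2
  have hBun : B = ⋃ q, (B ∩ S n q) := by
    rw [← Set.inter_iUnion, ← hSunion n]
    exact (Set.inter_eq_self_of_subset_left (fun x hx => hSsub 1 q₁ hx.1)).symm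
  have hBsup : (⨆ q, volume (B ∩ S n q)) = b := by
    rw [← Monotone.measure_iUnion (fun q q' hqq => Set.inter_subset_inter_right B
      (hSmono n hqq)), ← hBun]
  obtain ⟨q₂, hq₂⟩ : ∃ q, b / 2 < volume (B ∩ S n q) := by
    have hhalf : b / 2 < b := ENNReal.half_lt_self hb0 hbtop
    exact lt_iSup_iff.mp (lt_of_lt_of_le hhalf (le_of_eq hBsup.symm))
  set δ₂ : ℝ := 1 / (q₂ + 1) with hδ₂
  have hδ₂pos : 0 < δ₂ := by positivity
  set C : Set ℝ := B ∩ S n q₂ with hC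
  set P : ℕ → Set ℝ := fun i => C ∩ Set.Ico (w + i * δ₂) (w + (i + 1) * δ₂) with hPdef
  have hcov2 : volume C ≤ ∑ i ∈ Finset.range (q₂ + 1), volume (P i) := by
    apply cover_windows hδ₂pos
    intro x hx
    have hx' : x ∈ Set.Ico w (w + δ₁) := hx.1.2
    have : ((q₂ + 1 : ℕ) : ℝ) * δ₂ = 1 := by
      rw [hδ₂]
      push_cast
      field_simp
    rw [this]
    exact ⟨hx'.1, lt_of_lt_of_le hx'.2 (by linarith)⟩
  -- each piece expands into the image
  have himg : ∀ i, volume (P i) ≤ ((n : ℝ≥0) : ℝ≥0∞)⁻¹ * volume (f '' P i) := by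
    intro i
    apply vol_le_inv_mul_vol_image (by exact_mod_cast hn0)
    intro x hx y hy
    have hxS : x ∈ S n q₂ := hx.1.2
    have hyT : y ∈ T := hSsub n q₂ hy.1.2
    have hclose : |y - x| < 1 / (q₂ + 1) := by
      have h1 := hx.2
      have h2 := hy.2
      rw [Set.mem_Ico] at h1 h2
      rw [abs_lt]
      constructor <;> nlinarith [hδ₂pos]
    exact hxS.2 y hyT hclose
  -- separation of images of pieces with index gap ≥ 2
  have hsep : ∀ i j : ℕ, i + 2 ≤ j → ∀ u ∈ f '' P i, ∀ v ∈ f '' P j, δ₂ ≤ |u - v| := by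
    rintro i j hij u ⟨x, hx, rfl⟩ v ⟨y, hy, rfl⟩
    have hxI := hx.2
    have hyI := hy.2
    rw [Set.mem_Ico] at hxI hyI
    have hgap : δ₂ ≤ y - x := by
      have : ((i : ℝ) + 1) + 1 ≤ (j : ℝ) := by exact_mod_cast hij
      nlinarith [hδ₂pos]
    have hxB : x ∈ B := hx.1.1
    have hyB : y ∈ B := hy.1.1
    have hxS1 : x ∈ S 1 q₁ := hxB.1
    have hyT : y ∈ T := hSsub 1 q₁ hyB.1
    have hclose1 : |y - x| < 1 / (q₁ + 1) := by
      have h1 := hxB.2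
      have h2 := hyB.2
      rw [Set.mem_Ico] at h1 h2
      rw [abs_lt, ← hδ₁]
      constructor <;> nlinarith
    have hexp := hxS1.2 y hyT hclose1
    rw [Nat.cast_one, one_mul] at hexp
    have : δ₂ ≤ |y - x| := le_trans hgap (le_abs_self _)
    rw [abs_sub_comm (f x) (f y)]
    linarith
  -- sum the image volumes over even and odd indices
  have hsum_par : ∀ F : Finset ℕ, (∀ i ∈ F, ∀ j ∈ F, i ≠ j → i + 2 ≤ j ∨ j + 2 ≤ i) →
      ∑ i ∈ F, volume (f '' P i) ≤ volume (Set.Icc m (m + 1)) := by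
    intro F hF
    apply sum_vol_le_of_separated hδ₂pos
    · rintro i - u ⟨x, hx, rfl⟩
      exact hfT x (hSsub n q₂ hx.1.2)
    · intro i hi j hj hij u hu v hv
      rcases hF i hi j hj hij with h | h
      · exact hsep i j h u hu v hv
      · rw [abs_sub_comm]
        exact hsep j i h v hv u hu
  have hIcc : volume (Set.Icc m (m + 1)) = 1 := by simp
  have hsum2 : ∑ i ∈ Finset.range (q₂ + 1), volume (f '' P i) ≤ 2 := by
    have h1 : ∑ i ∈ (Finset.range (q₂ + 1)).filter (fun i => Even i), volume (f '' P i)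
        ≤ volume (Set.Icc m (m + 1)) := by
      apply hsum_par
      intro i hi j hj hij
      simp only [Finset.mem_filter, Nat.even_iff] at hi hj
      omega
    have h2 : ∑ i ∈ (Finset.range (q₂ + 1)).filter (fun i => ¬ Even i), volume (f '' P i)
        ≤ volume (Set.Icc m (m + 1)) := by
      apply hsum_par
      intro i hi j hj hij
      simp only [Finset.mem_filter, Nat.even_iff] at hi hj
      omega
    rw [hIcc] at h1 h2
    rw [← Finset.sum_filter_add_sum_filter_not (Finset.range (q₂ + 1)) (fun i => Even i)]
    calc _ ≤ (1 : ℝ≥0∞) + 1 := add_le_add h1 h2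
      _ = 2 := by norm_num
  -- final contradiction
  have hchain : b / 2 < 2 * (n : ℝ≥0∞)⁻¹ := by
    calc b / 2 < volume C := hq₂
      _ ≤ ∑ i ∈ Finset.range (q₂ + 1), volume (P i) := hcov2
      _ ≤ ∑ i ∈ Finset.range (q₂ + 1), ((n : ℝ≥0) : ℝ≥0∞)⁻¹ * volume (f '' P i) :=
          Finset.sum_le_sum fun i _ => himg i
      _ = ((n : ℝ≥0) : ℝ≥0∞)⁻¹ * ∑ i ∈ Finset.range (q₂ + 1), volume (f '' P i) :=
          (Finset.mul_sum _ _ _).symm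
      _ ≤ ((n : ℝ≥0) : ℝ≥0∞)⁻¹ * 2 := by
          exact mul_le_mul_right hsum2 _
      _ = 2 * (n : ℝ≥0∞)⁻¹ := by
          rw [mul_comm]
          norm_cast
  have hlast : 2 * (n : ℝ≥0∞)⁻¹ ≤ b / 2 := by
    calc 2 * (n : ℝ≥0∞)⁻¹ ≤ 2 * (b / 4) := by
          exact mul_le_mul_right hn.le _
      _ = 2 * b / 4 := (mul_div_assoc _ _ _).symm
      _ = b / 2 := by
          have h4 : (4 : ℝ≥0∞) = 2 * 2 := by norm_num
          rw [h4]
          exact ENNReal.mul_div_mul_left b 2 (by norm_num) (by norm_num)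
  exact absurd (lt_of_lt_of_le hchain hlast) (lt_irrefl _)

/-- For any `D ⊆ ℝ` and any `f : D → ℝ`, for almost every `x ∈ D` there is
a sequence `(x_k) ⊆ D \ {x}` converging to `x` such that the difference quotients
`(f(x_k) - f(x)) / (x_k - x)` converge to a finite limit; i.e. with
`C = {x} ∪ {x_k : k ∈ ℕ}`, the restriction `f|_C` is differentiable at `x`
with finite derivative. -/
theorem differentiable_along_sequence_ae (D : Set ℝ) (f : ℝ → ℝ) :
    volume {x ∈ D | ¬ ∃ x_k : ℕ → ℝ, (∀ k, x_k k ∈ D \ {x}) ∧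
      Tendsto x_k atTop (𝓝 x) ∧
      ∃ L : ℝ, Tendsto (fun k => (f (x_k k) - f x) / (x_k k - x)) atTop (𝓝 L)} = 0 := by
  classical
  set Big : Set ℝ := {x | x ∈ D ∧ ∀ N : ℕ, ∃ δ > (0 : ℝ), ∀ y ∈ D, |y - x| < δ →
    (N : ℝ) * |y - x| ≤ |f y - f x|} with hBig
  have hsub : {x ∈ D | ¬ ∃ x_k : ℕ → ℝ, (∀ k, x_k k ∈ D \ {x}) ∧
      Tendsto x_k atTop (𝓝 x) ∧
      ∃ L : ℝ, Tendsto (fun k => (f (x_k k) - f x) / (x_k k - x)) atTop (𝓝 L)} ⊆ Big := by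
    rintro x ⟨hxD, hbad⟩
    refine ⟨hxD, ?_⟩
    by_contra hcon
    push_neg at hcon
    obtain ⟨N, hN⟩ := hcon
    apply hbad
    have hch : ∀ k : ℕ, ∃ y, y ∈ D ∧ |y - x| < 1 / (k + 1) ∧
        |f y - f x| < (N : ℝ) * |y - x| := by
      intro k
      obtain ⟨y, hyD, h1, h2⟩ := hN (1 / (k + 1)) (by positivity)
      exact ⟨y, hyD, h1, h2⟩
    choose y hyD hyclose hyq using hch
    have hyne : ∀ k, y k ≠ x := by
      intro k h
      have h2 := hyq k
      rw [h] at h2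
      simp at h2
    set q : ℕ → ℝ := fun k => (f (y k) - f x) / (y k - x) with hq
    have hqmem : ∀ k, q k ∈ Set.Icc (-(N : ℝ)) N := by
      intro k
      have habs : |q k| ≤ N := by
        rw [hq]
        simp only []
        rw [abs_div]
        rw [div_le_iff₀ (abs_pos.mpr (sub_ne_zero.mpr (hyne k)))]
        exact (hyq k).le
      exact abs_le.mp habs
    obtain ⟨L, -, φ, hφmono, hφt⟩ :=
      (isCompact_Icc (a := -(N : ℝ)) (b := (N : ℝ))).tendsto_subseq hqmem
    refine ⟨y ∘ φ, fun k => ⟨hyD _, by simp [hyne _]⟩, ?_, L, ?_⟩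
    · have htend : Tendsto (fun k => |y (φ k) - x|) atTop (𝓝 0) := by
        apply squeeze_zero (fun k => abs_nonneg _) (fun k => ?_)
          tendsto_one_div_add_atTop_nhds_zero_nat
        calc |y (φ k) - x| ≤ 1 / ((φ k : ℝ) + 1) := (hyclose (φ k)).le
          _ ≤ 1 / ((k : ℝ) + 1) := by
              apply one_div_le_one_div_of_le (by positivity)
              have hk : k ≤ φ k := hφmono.le_apply
              have : (k : ℝ) ≤ (φ k : ℝ) := by exact_mod_cast hk
              linarith
      rw [tendsto_iff_dist_tendsto_zero]
      simpa [Real.dist_eq] using htend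
    · exact hφt
  have hcover : Big ⊆ ⋃ (p : ℤ), ⋃ (m : ℤ), {x | x ∈ Big ∧ x ∈ Set.Ico (p : ℝ) ((p : ℝ) + 1)
      ∧ f x ∈ Set.Icc (m : ℝ) ((m : ℝ) + 1)} := by
    intro x hx
    refine Set.mem_iUnion.mpr ⟨⌊x⌋, Set.mem_iUnion.mpr ⟨⌊f x⌋, hx, ?_, ?_⟩⟩
    · exact ⟨Int.floor_le x, Int.lt_floor_add_one x⟩
    · exact ⟨Int.floor_le (f x), (Int.lt_floor_add_one (f x)).le⟩
  have hBigNull : volume Big = 0 := by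
    refine measure_mono_null hcover ?_
    refine measure_iUnion_null fun p => measure_iUnion_null fun m => ?_
    apply slice_null (p := (p : ℝ)) (m := (m : ℝ)) (f := f)
    · intro x hx
      exact hx.2.1
    · intro x hx
      exact hx.2.2
    · intro x hx N
      obtain ⟨δ, hδ, h⟩ := hx.1.2 N
      exact ⟨δ, hδ, fun z hz hclose => h z hz.1.1 hclose⟩
  exact measure_mono_null hsub hBigNull
end

section
/- Let n, m ≥ 1 be integers and let α > n/m be a real number. Then there exists a function f : [0,∞)^n → [0,∞)^m such that for every x ∈ [0,∞)^n, the quotient |f(x) − f(y)| / |x − y|^α tends to infinity as y → x with y ∈ [0,∞)^n, y ≠ x. In particular, for every x ∈ [0,∞)^n and every sequence (x_k) ⊆ [0,∞)^n \ {x} converging to x, limsup_{k→∞} |f(x) − f(x_k)| / |x − x_k|^α = ∞, so f is not C^{0,α} at x even after restriction to any sequence converging to x. Hence the Hölder exponent α = n/m in the restriction theorem cannot be improved. -/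
open Filter Topology

noncomputable def dig (t : ℝ) (p : ℕ) : ℤ := ⌊t * 2 ^ p⌋ % 2

lemma dig_mem (t : ℝ) (p : ℕ) : dig t p = 0 ∨ dig t p = 1 :=
  Int.emod_two_eq_zero_or_one _

lemma floor_succ (t : ℝ) (p : ℕ) :
    ⌊t * 2 ^ (p + 1)⌋ = 2 * ⌊t * 2 ^ p⌋ + dig t (p + 1) := by
  have h1 : t * 2 ^ (p + 1) = 2 * (t * 2 ^ p) := by ring
  have h2 : 2 * ⌊t * 2 ^ p⌋ ≤ ⌊t * 2 ^ (p + 1)⌋ := by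
    rw [h1]
    refine Int.le_floor.2 ?_
    push_cast
    nlinarith [Int.floor_le (t * 2 ^ p)]
  have h3 : ⌊t * 2 ^ (p + 1)⌋ < 2 * ⌊t * 2 ^ p⌋ + 2 := by
    rw [h1]
    refine Int.floor_lt.2 ?_
    push_cast
    nlinarith [Int.lt_floor_add_one (t * 2 ^ p)]
  have h4 : dig t (p + 1) = ⌊t * 2 ^ (p + 1)⌋ % 2 := rfl
  omega

lemma floor_eq_of_digs (u v : ℝ) (hu : u ∈ Set.Ico (0 : ℝ) 1) (hv : v ∈ Set.Ico (0 : ℝ) 1)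
    (P : ℕ) (h : ∀ p, 1 ≤ p → p ≤ P → dig u p = dig v p) :
    ⌊u * 2 ^ P⌋ = ⌊v * 2 ^ P⌋ := by
  induction P with
  | zero =>
    simp only [pow_zero, mul_one]
    rw [Int.floor_eq_zero_iff.2 (by exact_mod_cast hu), Int.floor_eq_zero_iff.2 (by exact_mod_cast hv)]
  | succ P ih =>
    have hP : ⌊u * 2 ^ P⌋ = ⌊v * 2 ^ P⌋ := ih (fun p h1 h2 => h p h1 (h2.trans (Nat.le_succ P)))
    rw [floor_succ, floor_succ, hP, h (P + 1) (Nat.le_add_left 1 P) le_rfl]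

lemma abs_lt_of_floor_eq (u v : ℝ) (P : ℕ) (h : ⌊u * 2 ^ P⌋ = ⌊v * 2 ^ P⌋) :
    |u - v| < (2⁻¹ : ℝ) ^ P := by
  have h2 : (0:ℝ) < 2 ^ P := by positivity
  have l1 := Int.floor_le (u * 2 ^ P)
  have l2 := Int.lt_floor_add_one (u * 2 ^ P)
  have l3 := Int.floor_le (v * 2 ^ P)
  have l4 := Int.lt_floor_add_one (v * 2 ^ P)
  rw [h] at l1 l2
  rw [abs_sub_lt_iff, inv_pow, inv_eq_one_div]
  constructor <;> rw [lt_div_iff₀ h2] <;> nlinarith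

lemma eq_of_all_digs (u v : ℝ) (hu : u ∈ Set.Ico (0 : ℝ) 1) (hv : v ∈ Set.Ico (0 : ℝ) 1)
    (h : ∀ p, 1 ≤ p → dig u p = dig v p) : u = v := by
  by_contra hne
  have habs : 0 < |u - v| := abs_pos.2 (sub_ne_zero.2 hne)
  obtain ⟨P, hP⟩ := exists_pow_lt_of_lt_one habs (by norm_num : (2⁻¹:ℝ) < 1)
  exact absurd (abs_lt_of_floor_eq u v P (floor_eq_of_digs u v hu hv P (fun p h1 _ => h p h1)))
    (not_lt.2 hP.le)



noncomputable def bitf (n : ℕ) (u : Fin n → ℝ) (s : ℕ) : ℝ :=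
  if h : n = 0 then 0
  else ((dig (u ⟨s % n, Nat.mod_lt _ (Nat.pos_of_ne_zero h)⟩) (s / n + 1) : ℤ) : ℝ)

def ee (d k : ℕ) : ℕ := k + k / d

noncomputable def ww (d k : ℕ) : ℝ := (2⁻¹ : ℝ) ^ (ee d k)

noncomputable def G (n m d : ℕ) (j : ℕ) (u : Fin n → ℝ) : ℝ :=
  ∑' k, bitf n u (k * m + j) * ww d k

lemma dig_mem' (t : ℝ) (p : ℕ) : dig t p = 0 ∨ dig t p = 1 :=
  Int.emod_two_eq_zero_or_one _

lemma bitf_mem (n : ℕ) (u : Fin n → ℝ) (s : ℕ) : bitf n u s = 0 ∨ bitf n u s = 1 := by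
  unfold bitf
  split
  · exact Or.inl rfl
  · rcases dig_mem' (u _) _ with h | h <;> [left; right] <;> rw [h] <;> norm_num

lemma bitf_nonneg (n : ℕ) (u : Fin n → ℝ) (s : ℕ) : 0 ≤ bitf n u s := by
  rcases bitf_mem n u s with h | h <;> rw [h] <;> norm_num

lemma bitf_le_one (n : ℕ) (u : Fin n → ℝ) (s : ℕ) : bitf n u s ≤ 1 := by
  rcases bitf_mem n u s with h | h <;> rw [h] <;> norm_num

lemma ww_pos (d k : ℕ) : 0 < ww d k := by unfold ww; positivity

lemma ww_le_geo (d k : ℕ) : ww d k ≤ (2⁻¹ : ℝ) ^ k :=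
  pow_le_pow_of_le_one (by norm_num) (by norm_num) (Nat.le_add_right _ _)

lemma summable_ww (d : ℕ) : Summable (ww d) := by
  refine Summable.of_nonneg_of_le (fun k => (ww_pos d k).le) (fun k => ww_le_geo d k) ?_
  exact summable_geometric_of_lt_one (by norm_num) (by norm_num)

lemma summable_G (n m d : ℕ) (j : ℕ) (u : Fin n → ℝ) :
    Summable (fun k => bitf n u (k * m + j) * ww d k) := by
  refine Summable.of_nonneg_of_le
    (fun k => mul_nonneg (bitf_nonneg _ _ _) (ww_pos d k).le)
    (fun k => ?_) (summable_ww d)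
  calc bitf n u (k * m + j) * ww d k ≤ 1 * ww d k :=
        mul_le_mul_of_nonneg_right (bitf_le_one _ _ _) (ww_pos d k).le
    _ = ww d k := one_mul _

lemma div_add_div_le (a b d : ℕ) (hd : 0 < d) : a / d + b / d ≤ (a + b) / d := by
  rw [Nat.le_div_iff_mul_le hd, Nat.add_mul]
  have := Nat.div_mul_le_self a d
  have := Nat.div_mul_le_self b d
  omega

lemma ee_mono_add (d k j : ℕ) (hd : 0 < d) : ee d k + j + j / d ≤ ee d (k + j) := by
  unfold ee
  have := div_add_div_le k j d hd
  omega

-- tail bound : ∑' i, ww d (k+1+i) ≤ (1 - (2⁻¹)^d) * ww d k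
lemma geo_shift (t : ℕ) : ∑ i ∈ Finset.range t, (2⁻¹:ℝ) ^ (1 + i) = 1 - (2⁻¹:ℝ) ^ t := by
  induction t with
  | zero => simp
  | succ t ih =>
    rw [Finset.sum_range_succ, ih, pow_succ, pow_add]
    ring

lemma tail_bound (d k : ℕ) (hd : 0 < d) :
    ∑' i, ww d (k + 1 + i) ≤ (1 - (2⁻¹ : ℝ) ^ d) * ww d k := by
  obtain ⟨t, rfl⟩ : ∃ t, d = t + 1 := ⟨d - 1, by omega⟩
  set d := t + 1
  have hd' : 0 < d := Nat.succ_pos t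
  set bnd : ℕ → ℝ := fun i => if i + 1 < d then (2⁻¹ : ℝ) ^ (1 + i) else (2⁻¹ : ℝ) ^ (2 + i) with hbnd
  have hb_nonneg : ∀ i, (0:ℝ) ≤ bnd i := by
    intro i; simp only [hbnd]; split <;> positivity
  have hb_summable : Summable bnd := by
    refine Summable.of_nonneg_of_le hb_nonneg (fun i => ?_)
      (summable_geometric_of_lt_one (by norm_num) (by norm_num : (2⁻¹:ℝ) < 1))
    simp only [hbnd]
    split <;> refine pow_le_pow_of_le_one (by norm_num) (by norm_num) (by omega)
  have hpt : ∀ i, ww d (k + 1 + i) ≤ ww d k * bnd i := by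
    intro i
    have hrw : k + 1 + i = k + (1 + i) := by omega
    have hkey := ee_mono_add d k (1 + i) hd'
    simp only [hbnd]
    split
    · have h1 : ee d k + (1 + i) ≤ ee d (k + (1 + i)) :=
        le_trans (Nat.le_add_right _ _) hkey
      unfold ww
      rw [← pow_add, hrw]
      exact pow_le_pow_of_le_one (by norm_num) (by norm_num) h1
    · have hge : d ≤ 1 + i := by omega
      have h2 : 1 ≤ (1 + i) / d := (Nat.one_le_div_iff hd').2 hge
      have h1 : ee d k + (2 + i) ≤ ee d (k + (1 + i)) := by
        refine le_trans ?_ hkey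
        omega
      unfold ww
      rw [← pow_add, hrw]
      exact pow_le_pow_of_le_one (by norm_num) (by norm_num) h1
  have hsum_bnd : ∑' i, bnd i ≤ 1 - (2⁻¹ : ℝ) ^ d := by
    have hsplit := (Summable.sum_add_tsum_nat_add (f := bnd) t hb_summable).symm
    have hfin : ∑ i ∈ Finset.range t, bnd i = 1 - (2⁻¹:ℝ) ^ t := by
      rw [Finset.sum_congr rfl (fun i hi => ?_), geo_shift]
      simp only [hbnd]
      rw [if_pos (by have := Finset.mem_range.1 hi; omega)]
    have htail : ∑' i, bnd (i + t) = (2⁻¹:ℝ) ^ d := by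
      have hb2 : ∀ i : ℕ, bnd (i + t) = (2⁻¹:ℝ) ^ (d + 1) * (2⁻¹:ℝ) ^ i := by
        intro i
        simp only [hbnd]
        rw [if_neg (by omega), ← pow_add]
        congr 1
        omega
      rw [tsum_congr hb2, tsum_mul_left, tsum_geometric_of_lt_one (by norm_num) (by norm_num)]
      rw [pow_succ]
      ring
    rw [hsplit, hfin, htail]
    have : (2⁻¹:ℝ) ^ t = 2 * (2⁻¹:ℝ) ^ d := by
      rw [pow_succ]; ring
    rw [this]; linarith [pow_pos (by norm_num : (0:ℝ) < 2⁻¹) d]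
  have hls : Summable (fun i => ww d (k + 1 + i)) := by
    have := (summable_nat_add_iff (f := ww d) (k+1)).2 (summable_ww d)
    refine this.congr (fun i => ?_)
    congr 1
    omega
  calc ∑' i, ww d (k + 1 + i) ≤ ∑' i, ww d k * bnd i :=
        Summable.tsum_le_tsum hpt hls (hb_summable.mul_left _)
    _ = ww d k * ∑' i, bnd i := tsum_mul_left
    _ ≤ ww d k * (1 - (2⁻¹:ℝ) ^ d) := by
        refine mul_le_mul_of_nonneg_left hsum_bnd (ww_pos d k).le
    _ = (1 - (2⁻¹:ℝ) ^ d) * ww d k := mul_comm _ _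


variable {n : ℕ} (u : Fin n → ℝ)

lemma bitf_eval (i : Fin n) (p : ℕ) (hp : 1 ≤ p) :
    bitf n u ((p - 1) * n + i.val) = ((dig (u i) p : ℤ) : ℝ) := by
  have hn0 : n ≠ 0 := i.pos.ne'
  have h1 : ((p - 1) * n + i.val) % n = i.val := by
    rw [Nat.add_comm ((p - 1) * n) i.val, Nat.add_mul_mod_self_right, Nat.mod_eq_of_lt i.isLt]
  have h2 : ((p - 1) * n + i.val) / n + 1 = p := by
    rw [Nat.add_comm ((p - 1) * n) i.val, Nat.add_mul_div_right _ _ i.pos, Nat.div_eq_of_lt i.isLt]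
    omega
  unfold bitf
  rw [dif_neg hn0]
  simp only [h1, h2, Fin.eta]

lemma sep (n m d : ℕ) (hn : 0 < n) (hm : 0 < m) (hd : 0 < d)
    (u v : Fin n → ℝ) (hu : ∀ i, u i ∈ Set.Ico (0:ℝ) 1) (hv : ∀ i, v i ∈ Set.Ico (0:ℝ) 1)
    (huv : u ≠ v) :
    ∃ S : ℕ, (∀ i, |u i - v i| < (2⁻¹:ℝ) ^ (S / n)) ∧
      ∃ j : Fin m, (2⁻¹:ℝ) ^ (ee d (S / m) + d) ≤ |G n m d j.val u - G n m d j.val v| := by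
  classical
  have hex : ∃ s, bitf n u s ≠ bitf n v s := by
    by_contra h
    push_neg at h
    refine huv (funext fun i => ?_)
    refine eq_of_all_digs _ _ (hu i) (hv i) (fun p hp => ?_)
    have := h ((p - 1) * n + i.val)
    rw [bitf_eval u i p hp, bitf_eval v i p hp] at this
    exact_mod_cast this
  set S := Nat.find hex with hSdef
  have hS : bitf n u S ≠ bitf n v S := Nat.find_spec hex
  have hmin : ∀ s, s < S → bitf n u s = bitf n v s := by
    intro s hs
    by_contra hc
    exact Nat.lt_irrefl _ (Nat.lt_of_lt_of_le hs (Nat.find_le hc))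
  clear_value S
  refine ⟨S, fun i => ?_, ?_⟩
  · -- coordinate bound
    refine abs_lt_of_floor_eq _ _ _ (floor_eq_of_digs _ _ (hu i) (hv i) (S / n)
      (fun p hp1 hp2 => ?_))
    have hslot : (p - 1) * n + i.val < S := by
      calc (p - 1) * n + i.val < (p - 1) * n + n := by omega
        _ = p * n := by
            cases p with
            | zero => omega
            | succ q => simp [Nat.succ_sub_one, Nat.succ_mul]
        _ ≤ (S / n) * n := Nat.mul_le_mul_right n hp2
        _ ≤ S := Nat.div_mul_le_self S n
    have := hmin _ hslot
    rw [bitf_eval u i p hp1, bitf_eval v i p hp1] at this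
    exact_mod_cast this
  · -- G bound
    set K := S / m with hK
    have hσS : K * m + S % m = S := by
      rw [Nat.mul_comm]; exact Nat.div_add_mod S m
    refine ⟨⟨S % m, Nat.mod_lt _ hm⟩, ?_⟩
    set j := S % m with hj
    set c : ℕ → ℝ := fun k => bitf n u (k * m + j) - bitf n v (k * m + j) with hc
    have hsu := summable_G n m d j u
    have hsv := summable_G n m d j v
    have hcs : Summable (fun k => c k * ww d k) := by
      refine (hsu.sub hsv).congr (fun k => ?_)
      simp [hc, sub_mul]
    have hGdiff : G n m d j u - G n m d j v = ∑' k, c k * ww d k := by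
      unfold G
      rw [← Summable.tsum_sub hsu hsv]
      exact tsum_congr (fun k => by simp [hc, sub_mul])
    have hczero : ∀ k, k < K → c k * ww d k = 0 := by
      intro k hk
      have hlt : k * m + j < S := by
        calc k * m + j < K * m + j := by
              have := (Nat.mul_lt_mul_right hm).2 hk
              omega
          _ = S := hσS
      simp [hc, hmin _ hlt]
    have habs_cK : |c K| = 1 := by
      have h1 := bitf_mem n u (K * m + j)
      have h2 := bitf_mem n v (K * m + j)
      have hne : bitf n u (K * m + j) ≠ bitf n v (K * m + j) := by
        rw [hσS]; exact hS
      rcases h1 with h1 | h1 <;> rcases h2 with h2 | h2 <;>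
        simp [hc, h1, h2] at hne ⊢ <;> norm_num
    -- split the sum
    have hsplit := Summable.sum_add_tsum_nat_add (f := fun k => c k * ww d k) (K + 1) hcs
    have hfin : ∑ k ∈ Finset.range (K + 1), c k * ww d k = c K * ww d K := by
      rw [Finset.sum_eq_single_of_mem K (Finset.self_mem_range_succ K)]
      intro b hb hbne
      exact hczero b (by have := Finset.mem_range.1 hb; omega)
    have htail_abs : |∑' k, c (k + (K + 1)) * ww d (k + (K + 1))|
        ≤ (1 - (2⁻¹:ℝ) ^ d) * ww d K := by
      have hsum_shift : Summable (fun k => c (k + (K + 1)) * ww d (k + (K + 1))) :=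
        (summable_nat_add_iff (f := fun k => c k * ww d k) (K + 1)).2 hcs
      have hsumw : Summable (fun k => ww d (K + 1 + k)) := by
        refine ((summable_nat_add_iff (f := ww d) (K + 1)).2 (summable_ww d)).congr (fun k => ?_)
        congr 1; omega
      have h1 : |∑' k, c (k + (K + 1)) * ww d (k + (K + 1))|
          ≤ ∑' k, ww d (K + 1 + k) := by
        rw [← Real.norm_eq_abs]
        refine (norm_tsum_le_tsum_norm (by simpa only [Real.norm_eq_abs] using hsum_shift.abs)).trans ?_
        refine Summable.tsum_le_tsum (fun k => ?_) (by simpa only [Real.norm_eq_abs] using hsum_shift.abs) hsumw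
        have hcb : |c (k + (K + 1))| ≤ 1 := by
          rcases bitf_mem n u ((k + (K + 1)) * m + j) with h1 | h1 <;>
            rcases bitf_mem n v ((k + (K + 1)) * m + j) with h2 | h2 <;>
              simp [hc, h1, h2]
        rw [Real.norm_eq_abs, abs_mul, abs_of_pos (ww_pos d _)]
        calc |c (k + (K + 1))| * ww d (k + (K + 1)) ≤ 1 * ww d (k + (K + 1)) :=
              mul_le_mul_of_nonneg_right hcb (ww_pos d _).le
          _ = ww d (K + 1 + k) := by rw [one_mul]; congr 1; omega
      exact h1.trans (tail_bound d K hd)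
    have hfinal : (2⁻¹:ℝ) ^ (ee d K + d) ≤ |G n m d j u - G n m d j v| := by
      rw [hGdiff, ← hsplit, hfin]
      have h2 : |c K * ww d K| = ww d K := by
        rw [abs_mul, habs_cK, one_mul, abs_of_pos (ww_pos d K)]
      have h3 := abs_sub_abs_le_abs_sub (c K * ww d K)
        (-(∑' k, c (k + (K + 1)) * ww d (k + (K + 1))))
      have harith : (2⁻¹:ℝ) ^ (ee d K + d) = ww d K - (1 - (2⁻¹:ℝ)^d) * ww d K := by
        unfold ww
        rw [pow_add]
        ring
      rw [harith]
      calc ww d K - (1 - (2⁻¹:ℝ)^d) * ww d K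
          ≤ |c K * ww d K| - |∑' k, c (k + (K + 1)) * ww d (k + (K + 1))| := by
            rw [h2]; linarith [htail_abs]
        _ ≤ |c K * ww d K + ∑' k, c (k + (K + 1)) * ww d (k + (K + 1))| := by
            have := abs_sub_abs_le_abs_sub (c K * ww d K)
              (-(∑' k, c (k + (K + 1)) * ww d (k + (K + 1))))
            rw [abs_neg, sub_neg_eq_add] at this
            exact this
    exact hfinal
lemma key (n m d : ℕ) (hn : 0 < n) (hm : 0 < m) (hd : 0 < d)
    (u v : Fin n → ℝ) (hu : ∀ i, u i ∈ Set.Ico (0:ℝ) 1) (hv : ∀ i, v i ∈ Set.Ico (0:ℝ) 1) :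
    ∃ j : Fin m, (2⁻¹:ℝ)^d * ((∑ i, |u i - v i|) / (2*n)) ^ ((n:ℝ)*((d:ℝ)+1)/((d:ℝ)*m))
      ≤ |G n m d j.val u - G n m d j.val v| := by
  have hn' : (0:ℝ) < n := by exact_mod_cast hn
  have hm' : (0:ℝ) < m := by exact_mod_cast hm
  have hd' : (0:ℝ) < d := by exact_mod_cast hd
  set β : ℝ := (n:ℝ)*((d:ℝ)+1)/((d:ℝ)*m) with hβ
  have hβpos : 0 < β := by rw [hβ]; positivity
  by_cases huv : u = v
  · refine ⟨⟨0, hm⟩, ?_⟩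
    subst huv
    simp [Real.zero_rpow hβpos.ne']
  · obtain ⟨S, hcoord, j, hG⟩ := sep n m d hn hm hd u v hu hv huv
    refine ⟨j, ?_⟩
    set t : ℝ := (2⁻¹:ℝ) ^ (S:ℝ) with ht
    have ht_pos : 0 < t := Real.rpow_pos_of_pos (by norm_num) _
    have hAnn : (0:ℝ) ≤ ∑ i, |u i - v i| := Finset.sum_nonneg (fun i _ => abs_nonneg _)
    have hA : (∑ i, |u i - v i|) ≤ (n:ℝ) * (2⁻¹:ℝ)^(S/n) := by
      calc ∑ i, |u i - v i| ≤ ∑ _i : Fin n, (2⁻¹:ℝ)^(S/n) :=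
            Finset.sum_le_sum (fun i _ => (hcoord i).le)
        _ = (n:ℝ) * (2⁻¹:ℝ)^(S/n) := by
            rw [Finset.sum_const, Finset.card_univ, Fintype.card_fin, nsmul_eq_mul]
    have hQ : (2⁻¹:ℝ)^(S/n : ℕ) ≤ 2 * t ^ ((n:ℝ)⁻¹) := by
      have hdm := Nat.div_add_mod S n
      have hmod := Nat.mod_lt S hn
      have hS_lt : S < n*(S/n) + n := by omega
      have hcast : (S:ℝ) < (n:ℝ) * ((S/n : ℕ):ℝ) + n := by exact_mod_cast hS_lt
      have h1 : (S:ℝ)/n - 1 ≤ ((S/n : ℕ):ℝ) := by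
        rw [sub_le_iff_le_add, div_le_iff₀ hn']
        nlinarith
      calc (2⁻¹:ℝ)^(S/n : ℕ) = (2⁻¹:ℝ) ^ (((S/n : ℕ):ℝ)) := (Real.rpow_natCast _ _).symm
        _ ≤ (2⁻¹:ℝ) ^ ((S:ℝ)/n - 1) :=
            Real.rpow_le_rpow_of_exponent_ge (by norm_num) (by norm_num) h1
        _ = 2 * t ^ ((n:ℝ)⁻¹) := by
            rw [Real.rpow_sub (by norm_num), Real.rpow_one, div_eq_mul_inv (S:ℝ),
              Real.rpow_mul (by norm_num : (0:ℝ) ≤ 2⁻¹), ← ht]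
            field_simp
    have hA2 : (∑ i, |u i - v i|) / (2*(n:ℝ)) ≤ t ^ ((n:ℝ)⁻¹) := by
      rw [div_le_iff₀ (by positivity)]
      have h2 := mul_le_mul_of_nonneg_left hQ hn'.le
      calc ∑ i, |u i - v i| ≤ (n:ℝ) * (2⁻¹:ℝ)^(S/n) := hA
        _ ≤ (n:ℝ) * (2 * t ^ ((n:ℝ)⁻¹)) := h2
        _ = t ^ ((n:ℝ)⁻¹) * (2 * n) := by ring
    have hKb : ((ee d (S/m) + d : ℕ):ℝ) ≤ (S:ℝ)/m + (S:ℝ)/((m:ℝ)*d) + d := by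
      have c1 : ((S/m : ℕ):ℝ) ≤ (S:ℝ)/m := Nat.cast_div_le
      have c2 : ((S/m/d : ℕ):ℝ) ≤ (S:ℝ)/((m:ℝ)*d) := by
        rw [Nat.div_div_eq_div_mul]
        have := Nat.cast_div_le (α := ℝ) (m := S) (n := m*d)
        push_cast at this
        exact this
      unfold ee
      push_cast
      linarith
    have hGlow : (2⁻¹:ℝ)^d * t ^ ((1:ℝ)/m + 1/((m:ℝ)*d)) ≤ (2⁻¹:ℝ) ^ (ee d (S/m) + d) := by
      calc (2⁻¹:ℝ)^d * t ^ ((1:ℝ)/m + 1/((m:ℝ)*d))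
          = (2⁻¹:ℝ) ^ ((S:ℝ)/m + (S:ℝ)/((m:ℝ)*d) + d) := by
            rw [ht, ← Real.rpow_natCast (2⁻¹:ℝ) d, ← Real.rpow_mul (by norm_num : (0:ℝ) ≤ 2⁻¹),
              ← Real.rpow_add (by norm_num : (0:ℝ) < 2⁻¹)]
            congr 1
            field_simp
            ring
        _ ≤ (2⁻¹:ℝ) ^ (((ee d (S/m) + d : ℕ):ℝ)) :=
            Real.rpow_le_rpow_of_exponent_ge (by norm_num) (by norm_num) hKb
        _ = (2⁻¹:ℝ) ^ (ee d (S/m) + d) := Real.rpow_natCast _ _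
    have hexp : t ^ ((n:ℝ)⁻¹ * β) = t ^ ((1:ℝ)/m + 1/((m:ℝ)*d)) := by
      congr 1
      rw [hβ]
      field_simp
    calc (2⁻¹:ℝ)^d * ((∑ i, |u i - v i|) / (2*(n:ℝ))) ^ β
        ≤ (2⁻¹:ℝ)^d * (t ^ ((n:ℝ)⁻¹)) ^ β := by
          refine mul_le_mul_of_nonneg_left ?_ (by positivity)
          exact Real.rpow_le_rpow (by positivity) hA2 hβpos.le
      _ = (2⁻¹:ℝ)^d * t ^ ((n:ℝ)⁻¹ * β) := by
          rw [← Real.rpow_mul ht_pos.le]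
      _ = (2⁻¹:ℝ)^d * t ^ ((1:ℝ)/m + 1/((m:ℝ)*d)) := by rw [hexp]
      _ ≤ (2⁻¹:ℝ) ^ (ee d (S/m) + d) := hGlow
      _ ≤ |G n m d j.val u - G n m d j.val v| := hG
lemma coord_le (n : ℕ) (x : EuclideanSpace ℝ (Fin n)) (i : Fin n) : |x i| ≤ ‖x‖ := by
  rw [EuclideanSpace.norm_eq]
  simp only [Real.norm_eq_abs, sq_abs]
  rw [← Real.sqrt_sq_eq_abs]
  refine Real.sqrt_le_sqrt ?_
  exact Finset.single_le_sum (f := fun j => x j ^ 2) (fun j _ => sq_nonneg _) (Finset.mem_univ i)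

lemma norm_le_sum (n : ℕ) (x : EuclideanSpace ℝ (Fin n)) : ‖x‖ ≤ ∑ i, |x i| := by
  rw [EuclideanSpace.norm_eq]
  simp only [Real.norm_eq_abs, sq_abs]
  have h1 : ∑ i, x i ^ 2 ≤ (∑ i, |x i|) ^ 2 := by
    rw [sq (∑ i, |x i|), Finset.sum_mul_sum]
    calc ∑ i, x i ^ 2 = ∑ i, |x i| * |x i| := by
          refine Finset.sum_congr rfl (fun i _ => ?_)
          rw [sq, ← abs_mul_abs_self]
      _ ≤ ∑ i, ∑ j, |x i| * |x j| := by
          refine Finset.sum_le_sum (fun i _ => ?_)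
          refine Finset.single_le_sum (f := fun j => |x i| * |x j|) (fun j _ => by positivity) (Finset.mem_univ i)
  calc Real.sqrt (∑ i, x i ^ 2) ≤ Real.sqrt ((∑ i, |x i|) ^ 2) := Real.sqrt_le_sqrt h1
    _ = ∑ i, |x i| := Real.sqrt_sq (by positivity)

lemma norm_ge (n : ℕ) (L : ℝ) (hL : 0 ≤ L) (x y : EuclideanSpace ℝ (Fin n))
    (h : ∀ i, L * |y i| ≤ |x i|) : L * ‖y‖ ≤ ‖x‖ := by
  rw [EuclideanSpace.norm_eq, EuclideanSpace.norm_eq]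
  simp only [Real.norm_eq_abs, sq_abs]
  have : L * Real.sqrt (∑ i, y i ^ 2) = Real.sqrt (∑ i, L^2 * y i ^ 2) := by
    rw [← Finset.mul_sum, Real.sqrt_mul (by positivity), Real.sqrt_sq hL]
  rw [this]
  refine Real.sqrt_le_sqrt (Finset.sum_le_sum (fun i _ => ?_))
  have h2 : (L * |y i|)^2 ≤ |x i|^2 := by
    have h3 := h i
    have h4 : 0 ≤ L * |y i| := mul_nonneg hL (abs_nonneg _)
    nlinarith [abs_nonneg (x i)]
  calc L ^ 2 * y i ^ 2 = (L * |y i|)^2 := by rw [mul_pow, sq_abs]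
    _ ≤ |x i| ^ 2 := h2
    _ = x i ^ 2 := sq_abs _
lemma G_nonneg (n m d j : ℕ) (u : Fin n → ℝ) : 0 ≤ G n m d j u :=
  tsum_nonneg (fun k => mul_nonneg (bitf_nonneg _ _ _) (ww_pos d k).le)

/-- Sharpness of the Hölder exponent: for `n, m ≥ 1` and any real
`α > n/m` there is a function `f : [0,∞)ⁿ → [0,∞)ᵐ` such that for every `x ∈ [0,∞)ⁿ` the
quotient `|f(x) - f(y)| / |x - y|^α` tends to infinity as `y → x` within `[0,∞)ⁿ \ {x}`.
In particular, along every sequence `(x_k) ⊆ [0,∞)ⁿ \ {x}` converging to `x` the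
corresponding limsup is `∞`, so `f` is not `C^{0,α}` at `x` after restriction to any
sequence converging to `x`. -/
theorem holder_exponent_sharp (n m : ℕ) (hn : 1 ≤ n) (hm : 1 ≤ m)
    (α : ℝ) (hα : (n : ℝ) / m < α) :
    ∃ f : EuclideanSpace ℝ (Fin n) → EuclideanSpace ℝ (Fin m),
      (∀ x ∈ {y : EuclideanSpace ℝ (Fin n) | ∀ i, 0 ≤ y i},
        f x ∈ {z : EuclideanSpace ℝ (Fin m) | ∀ i, 0 ≤ z i}) ∧
      (∀ x ∈ {y : EuclideanSpace ℝ (Fin n) | ∀ i, 0 ≤ y i},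
        Tendsto (fun y => ‖f x - f y‖ / ‖x - y‖ ^ α)
          (𝓝[{y : EuclideanSpace ℝ (Fin n) | ∀ i, 0 ≤ y i} \ {x}] x) atTop) ∧
      (∀ x ∈ {y : EuclideanSpace ℝ (Fin n) | ∀ i, 0 ≤ y i},
        ∀ x_k : ℕ → EuclideanSpace ℝ (Fin n),
          (∀ k, x_k k ∈ {y : EuclideanSpace ℝ (Fin n) | ∀ i, 0 ≤ y i} \ {x}) →
          Tendsto x_k atTop (𝓝 x) →
          Filter.limsup (fun k =>
            ENNReal.ofReal (‖f x - f (x_k k)‖ / ‖x - x_k k‖ ^ α)) atTop = ⊤) := by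
  classical
  have hn0 : 0 < n := hn
  have hm0 : 0 < m := hm
  have hn' : (0:ℝ) < n := by exact_mod_cast hn0
  have hm' : (0:ℝ) < m := by exact_mod_cast hm0
  have hgap : (0:ℝ) < α - (n:ℝ)/m := by linarith
  obtain ⟨d0, hd0gt⟩ := exists_nat_gt (((n:ℝ)/m) / (α - (n:ℝ)/m))
  set d : ℕ := d0 + 1 with hddef
  have hd0 : 0 < d := Nat.succ_pos _
  have hd' : (0:ℝ) < d := by exact_mod_cast hd0
  set β : ℝ := (n:ℝ)*((d:ℝ)+1)/((d:ℝ)*m) with hβ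
  have hβpos : 0 < β := by rw [hβ]; positivity
  have hβα : β < α := by
    have hdgt : ((n:ℝ)/m) / (α - (n:ℝ)/m) < (d:ℝ) := by
      have : (d0:ℝ) ≤ (d:ℝ) := by exact_mod_cast Nat.le_succ d0
      linarith
    have h1 : (n:ℝ)/m < (α - (n:ℝ)/m) * d := by
      rw [div_lt_iff₀ hgap] at hdgt
      linarith
    have h2 : β = (n:ℝ)/m + ((n:ℝ)/m)/d := by
      rw [hβ]; field_simp
    rw [h2]
    have h3 : (n:ℝ)/m/d < α - (n:ℝ)/m := (div_lt_iff₀ hd').2 h1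
    linarith
  set Φ : EuclideanSpace ℝ (Fin n) → Fin n → ℝ := fun x i => x i / (1 + x i) with hΦ
  set f : EuclideanSpace ℝ (Fin n) → EuclideanSpace ℝ (Fin m) :=
    fun x => (WithLp.toLp 2 (fun j : Fin m => G n m d j.val (Φ x)) : EuclideanSpace ℝ (Fin m)) with hf
  have hforth : ∀ x, ∀ i : Fin m, 0 ≤ f x i := fun x i => G_nonneg n m d i.val (Φ x)
  have hΦmem : ∀ x : EuclideanSpace ℝ (Fin n), (∀ i, 0 ≤ x i) →
      ∀ i, Φ x i ∈ Set.Ico (0:ℝ) 1 := by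
    intro x hx i
    have h1 : (0:ℝ) < 1 + x i := by linarith [hx i]
    constructor
    · exact div_nonneg (hx i) h1.le
    · rw [div_lt_one h1]; linarith
  -- the main tendsto statement
  have main : ∀ x ∈ {y : EuclideanSpace ℝ (Fin n) | ∀ i, 0 ≤ y i},
      Tendsto (fun y => ‖f x - f y‖ / ‖x - y‖ ^ α)
        (𝓝[{y : EuclideanSpace ℝ (Fin n) | ∀ i, 0 ≤ y i} \ {x}] x) atTop := by
    intro x hx
    set s : Set (EuclideanSpace ℝ (Fin n)) := {y | ∀ i, 0 ≤ y i} with hs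
    set F := 𝓝[s \ {x}] x with hF
    set L : ℝ := ((1+‖x‖)*(2+‖x‖))⁻¹ with hL
    have hLpos : 0 < L := by
      rw [hL]
      have := norm_nonneg x
      positivity
    set C : ℝ := (2⁻¹:ℝ)^d * (L/(2*(n:ℝ)))^β with hC
    have hCpos : 0 < C := by
      rw [hC]
      have : 0 < (L/(2*(n:ℝ)))^β := Real.rpow_pos_of_pos (by positivity) β
      positivity
    -- eventual lower bound
    have hbound : ∀ᶠ y in F, C * ‖x - y‖ ^ (β - α) ≤ ‖f x - f y‖ / ‖x - y‖ ^ α := by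
      have hmem : ∀ᶠ y in F, y ∈ s \ {x} := eventually_mem_nhdsWithin
      have hball : ∀ᶠ y in F, ‖x - y‖ ≤ 1 := by
        have h1 : ∀ᶠ y in 𝓝 x, ‖x - y‖ ≤ 1 := by
          have h2 := Metric.closedBall_mem_nhds x one_pos
          filter_upwards [h2] with y hy
          rw [Metric.mem_closedBall, dist_comm] at hy
          rw [← dist_eq_norm]
          exact hy
        exact mem_nhdsWithin_of_mem_nhds h1
      filter_upwards [hmem, hball] with y hy hby
      obtain ⟨hys, hyx⟩ := hy
      have hyne : y ≠ x := hyx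
      have hxy_pos : 0 < ‖x - y‖ := by
        rw [norm_pos_iff, sub_ne_zero]
        exact fun h => hyne h.symm
      -- componentwise lower bound on Φ
      have hcomp : ∀ i, L * |x i - y i| ≤ |Φ x i - Φ y i| := by
        intro i
        have hxi : 0 ≤ x i := hx i
        have hyi : 0 ≤ y i := hys i
        have ha : (0:ℝ) < 1 + x i := by linarith
        have hb : (0:ℝ) < 1 + y i := by linarith
        have heq : Φ x i - Φ y i = (x i - y i) / ((1 + x i) * (1 + y i)) := by
          rw [hΦ]
          field_simp
          ring
        have hxin : x i ≤ ‖x‖ := (abs_le.1 (coord_le n x i)).2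
        have hyin : y i ≤ 1 + ‖x‖ := by
          have h3 : |x i - y i| ≤ ‖x - y‖ := by
            have := coord_le n (x - y) i
            simpa [PiLp.sub_apply] using this
          have h4 := (abs_le.1 h3).1
          linarith
        have hden : (1 + x i) * (1 + y i) ≤ (1+‖x‖)*(2+‖x‖) := by nlinarith
        rw [heq, abs_div, abs_of_pos (by positivity : (0:ℝ) < (1 + x i) * (1 + y i))]
        rw [hL, mul_comm]
        rw [div_eq_mul_inv]
        gcongr
      -- sum bound
      have hΦsum : L * ‖x - y‖ ≤ ∑ i, |Φ x i - Φ y i| := by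
        calc L * ‖x - y‖ ≤ L * ∑ i, |(x - y) i| := by
              have := norm_le_sum n (x - y)
              nlinarith
          _ = ∑ i, L * |x i - y i| := by
              rw [Finset.mul_sum]
              refine Finset.sum_congr rfl (fun i _ => by rw [PiLp.sub_apply])
          _ ≤ ∑ i, |Φ x i - Φ y i| := Finset.sum_le_sum (fun i _ => hcomp i)
      obtain ⟨j, hkey⟩ := key n m d hn0 hm0 hd0 (Φ x) (Φ y) (hΦmem x hx) (hΦmem y hys)
      have hfc : |(f x - f y) j| = |G n m d j.val (Φ x) - G n m d j.val (Φ y)| := by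
        rw [hf]
        simp [PiLp.sub_apply]
      have hnorm_low : C * ‖x - y‖ ^ β ≤ ‖f x - f y‖ := by
        have h5 : (L * ‖x - y‖) / (2*(n:ℝ)) ≤ (∑ i, |Φ x i - Φ y i|) / (2*(n:ℝ)) := by
          gcongr
        have h6 : ((L * ‖x - y‖) / (2*(n:ℝ))) ^ β ≤ ((∑ i, |Φ x i - Φ y i|) / (2*(n:ℝ))) ^ β :=
          Real.rpow_le_rpow (by positivity) h5 hβpos.le
        have h7 : ((L * ‖x - y‖) / (2*(n:ℝ))) ^ β = (L/(2*(n:ℝ)))^β * ‖x - y‖ ^ β := by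
          rw [show (L * ‖x - y‖) / (2*(n:ℝ)) = (L/(2*(n:ℝ))) * ‖x - y‖ by ring]
          exact Real.mul_rpow (by positivity) (norm_nonneg _)
        calc C * ‖x - y‖ ^ β = (2⁻¹:ℝ)^d * ((L/(2*(n:ℝ)))^β * ‖x - y‖ ^ β) := by
              rw [hC]; ring
          _ = (2⁻¹:ℝ)^d * ((L * ‖x - y‖) / (2*(n:ℝ))) ^ β := by rw [h7]
          _ ≤ (2⁻¹:ℝ)^d * ((∑ i, |Φ x i - Φ y i|) / (2*(n:ℝ))) ^ β := by
              refine mul_le_mul_of_nonneg_left h6 (by positivity)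
          _ ≤ |G n m d j.val (Φ x) - G n m d j.val (Φ y)| := hkey
          _ = |(f x - f y) j| := hfc.symm
          _ ≤ ‖f x - f y‖ := coord_le m _ j
      have hden_pos : 0 < ‖x - y‖ ^ α := Real.rpow_pos_of_pos hxy_pos α
      have h8 : C * ‖x - y‖ ^ (β - α) = (C * ‖x - y‖ ^ β) / ‖x - y‖ ^ α := by
        rw [Real.rpow_sub hxy_pos]
        ring
      rw [h8]
      gcongr
    -- the lower bound tends to atTop
    have h0 : Tendsto (fun y => ‖x - y‖) F (𝓝[>] 0) := by
      rw [tendsto_nhdsWithin_iff]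
      constructor
      · have hcont : Continuous (fun y : EuclideanSpace ℝ (Fin n) => ‖x - y‖) :=
          (continuous_const.sub continuous_id).norm
        have := hcont.tendsto x
        simp only [sub_self, norm_zero] at this
        exact this.mono_left nhdsWithin_le_nhds
      · filter_upwards [eventually_mem_nhdsWithin (s := s \ {x}) (a := x)] with y hy
        have hyne : y ≠ x := hy.2
        rw [Set.mem_Ioi, norm_pos_iff, sub_ne_zero]
        exact fun h => hyne h.symm
    have hpow : Tendsto (fun z : ℝ => C * z ^ (β - α)) (𝓝[>] (0:ℝ)) atTop := by
      have h1 : Tendsto (fun z : ℝ => z⁻¹) (𝓝[>] (0:ℝ)) atTop := tendsto_inv_nhdsGT_zero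
      have h2 : Tendsto (fun w : ℝ => w ^ (α - β)) atTop atTop :=
        tendsto_rpow_atTop (by linarith)
      have h3 := (h2.comp h1).const_mul_atTop hCpos
      refine h3.congr' ?_
      filter_upwards [self_mem_nhdsWithin] with z hz
      have hz' : (0:ℝ) < z := hz
      simp only [Function.comp]
      rw [← Real.rpow_neg_one z, ← Real.rpow_mul hz'.le]
      congr 1
      ring
    exact tendsto_atTop_mono' F hbound (hpow.comp h0)
  refine ⟨f, fun x _ => hforth x, main, ?_⟩
  intro x hx xk hmemk hconv
  have htend : Tendsto xk atTop
      (𝓝[{y : EuclideanSpace ℝ (Fin n) | ∀ i, 0 ≤ y i} \ {x}] x) := by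
    rw [tendsto_nhdsWithin_iff]
    exact ⟨hconv, Filter.Eventually.of_forall hmemk⟩
  have hcomp := (main x hx).comp htend
  have hofreal : Tendsto (fun k => ENNReal.ofReal (‖f x - f (xk k)‖ / ‖x - xk k‖ ^ α))
      atTop (𝓝 ⊤) := ENNReal.tendsto_ofReal_atTop.comp hcomp
  exact hofreal.limsup_eq
end

section
/- Let n, m ≥ 1, α ∈ (0,1], M ∈ [0,∞), let x ∈ ℝ^n, let (x_k) be a sequence in ℝ^n \ {x} converging to x, and let f be a function defined on {x} ∪ {x_k : k ∈ ℕ} with values in ℝ^m satisfying |f(x) − f(x_k)| ≤ M·|x − x_k|^α for all k. Then for every ε > 0 there exists a subsequence (x'_k) of (x_k), with pairwise distinct terms, such that f is uniformly C^{0,α} on C = {x} ∪ {x'_k : k ∈ ℕ} with constant (2^α + 1 + ε)·M, i.e. |f(y) − f(y')| ≤ (2^α + 1 + ε)·M·|y − y'|^α for all y, y' ∈ C. -/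
open Filter Topology

/-- Upgrading pointwise Hölder control along a sequence to a uniform
Hölder estimate on a subsequence: if `(x_k) ⊆ ℝⁿ \ {x}` converges to `x` and
`|f(x) - f(x_k)| ≤ M |x - x_k|^α` for all `k`, then for every `ε > 0` there is a
subsequence `(x_{φ(k)})` with pairwise distinct terms such that `f` is uniformly
`C^{0,α}` with constant `(2^α + 1 + ε) M` on `C = {x} ∪ {x_{φ(k)} : k ∈ ℕ}`. -/
theorem uniform_holder_on_subsequence (n m : ℕ) (hn : 1 ≤ n) (hm : 1 ≤ m)
    (α : ℝ) (hα : α ∈ Set.Ioc (0 : ℝ) 1) (M : ℝ) (hM : 0 ≤ M)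
    (x : EuclideanSpace ℝ (Fin n)) (x_k : ℕ → EuclideanSpace ℝ (Fin n))
    (hne : ∀ k, x_k k ≠ x) (hlim : Tendsto x_k atTop (𝓝 x))
    (f : EuclideanSpace ℝ (Fin n) → EuclideanSpace ℝ (Fin m))
    (hf : ∀ k, ‖f x - f (x_k k)‖ ≤ M * ‖x - x_k k‖ ^ α) :
    ∀ ε > (0 : ℝ), ∃ φ : ℕ → ℕ, StrictMono φ ∧
      (∀ i j, i ≠ j → x_k (φ i) ≠ x_k (φ j)) ∧
      ∀ y ∈ insert x (Set.range (x_k ∘ φ)), ∀ y' ∈ insert x (Set.range (x_k ∘ φ)),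
        ‖f y - f y'‖ ≤ (2 ^ α + 1 + ε) * M * ‖y - y'‖ ^ α := by
  intro ε hε
  obtain ⟨hα0, hα1⟩ := hα
  set C : ℝ := 2 ^ α + 1 + ε with hCdef
  have h2α : (1:ℝ) ≤ 2 ^ α := Real.one_le_rpow one_le_two hα0.le
  have hC1 : 1 ≤ C := by simp only [hCdef]; linarith
  -- choose δ ∈ (0,1) with 1 + δ^α ≤ C (1-δ)^α
  have hgcont : ContinuousAt (fun δ : ℝ => C * (1 - δ) ^ α - (1 + δ ^ α)) 0 := by
    apply ContinuousAt.sub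
    · apply ContinuousAt.mul continuousAt_const
      have h1 : ContinuousAt (fun t : ℝ => t ^ α) ((fun δ : ℝ => 1 - δ) 0) := by
        simp only [sub_zero]
        exact Real.continuousAt_rpow_const 1 α (Or.inl one_ne_zero)
      exact h1.comp (continuousAt_const.sub continuousAt_id)
    · exact continuousAt_const.add (Real.continuousAt_rpow_const 0 α (Or.inr hα0.le))
  have hg0 : (0:ℝ) < C * (1 - 0) ^ α - (1 + (0:ℝ) ^ α) := by
    rw [sub_zero, Real.one_rpow, Real.zero_rpow hα0.ne']
    simp only [hCdef]; linarith
  have hev : ∀ᶠ δ in 𝓝 (0:ℝ), 0 < C * (1 - δ) ^ α - (1 + δ ^ α) :=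
    hgcont.eventually (eventually_gt_nhds hg0)
  obtain ⟨η, hη, hball⟩ := Metric.eventually_nhds_iff.mp hev
  set δ : ℝ := min (η/2) (1/2) with hδdef
  have hδ0 : 0 < δ := lt_min (by linarith) (by norm_num)
  have hδ1 : δ < 1 := lt_of_le_of_lt (min_le_right _ _) (by norm_num)
  have hkey : 1 + δ ^ α ≤ C * (1 - δ) ^ α := by
    have : dist δ 0 < η := by
      rw [Real.dist_eq, sub_zero, abs_of_pos hδ0]
      exact lt_of_le_of_lt (min_le_left _ _) (by linarith)
    linarith [hball this]
  -- recursive construction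
  have hstep : ∀ N : ℕ, ∃ k, N < k ∧ ‖x - x_k k‖ ≤ δ * ‖x - x_k N‖ := by
    intro N
    have hr : 0 < ‖x - x_k N‖ := by
      rw [norm_sub_pos_iff]; exact (hne N).symm
    have h1 : ∀ᶠ k in atTop, dist (x_k k) x < δ * ‖x - x_k N‖ :=
      (Metric.tendsto_nhds.mp hlim) _ (by positivity)
    obtain ⟨k, hk1, hk2⟩ := ((eventually_gt_atTop N).and h1).exists
    refine ⟨k, hk1, ?_⟩
    rw [dist_eq_norm] at hk2
    rw [norm_sub_rev]
    exact hk2.le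
  choose g hg1 hg2 using hstep
  set φ : ℕ → ℕ := fun i => g^[i] 0 with hφdef
  have hφit : ∀ i, φ (i+1) = g (φ i) := fun i => Function.iterate_succ_apply' g i 0
  have hφsucc : ∀ i, φ i < φ (i+1) ∧ ‖x - x_k (φ (i+1))‖ ≤ δ * ‖x - x_k (φ i)‖ := by
    intro i
    rw [hφit i]
    exact ⟨hg1 _, hg2 _⟩
  set r : ℕ → ℝ := fun i => ‖x - x_k (φ i)‖ with hrdef
  have hrpos : ∀ i, 0 < r i := by
    intro i; rw [hrdef]; simp only [norm_sub_pos_iff]; exact (hne (φ i)).symm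
  have hranti : StrictAnti r := by
    apply strictAnti_nat_of_succ_lt
    intro i
    calc r (i+1) ≤ δ * r i := (hφsucc i).2
      _ < 1 * r i := by
          exact mul_lt_mul_of_pos_right hδ1 (hrpos i)
      _ = r i := one_mul _
  have hrle : ∀ i j, i < j → r j ≤ δ * r i := by
    intro i j hij
    calc r j ≤ r (i+1) := hranti.antitone hij
      _ ≤ δ * r i := (hφsucc i).2
  -- key estimate for two points of the subsequence
  have main : ∀ i j, i < j →
      ‖f (x_k (φ i)) - f (x_k (φ j))‖ ≤ C * M * ‖x_k (φ i) - x_k (φ j)‖ ^ α := by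
    intro i j hij
    set a := x_k (φ i)
    set b := x_k (φ j)
    have hsep : (1 - δ) * r i ≤ ‖a - b‖ := by
      have h1 : r i - r j ≤ ‖a - b‖ := by
        have h2 : ‖x - a‖ - ‖x - b‖ ≤ ‖(x - a) - (x - b)‖ := norm_sub_norm_le _ _
        have h3 : (x - a) - (x - b) = b - a := by abel
        rw [h3, norm_sub_rev b a] at h2
        exact h2
      have h4 : r j ≤ δ * r i := hrle i j hij
      nlinarith [hrpos i]
    have hCM : (0:ℝ) ≤ C * M := mul_nonneg (by linarith) hM
    have hriα : (0:ℝ) ≤ r i ^ α := Real.rpow_nonneg (hrpos i).le α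
    calc ‖f a - f b‖ = ‖(f x - f b) - (f x - f a)‖ := by
          congr 1; abel
      _ ≤ ‖f x - f b‖ + ‖f x - f a‖ := norm_sub_le _ _
      _ ≤ M * r j ^ α + M * r i ^ α := add_le_add (hf (φ j)) (hf (φ i))
      _ ≤ M * (δ ^ α * r i ^ α) + M * r i ^ α := by
          have h1 : r j ^ α ≤ (δ * r i) ^ α :=
            Real.rpow_le_rpow (hrpos j).le (hrle i j hij) hα0.le
          rw [Real.mul_rpow hδ0.le (hrpos i).le] at h1
          have := mul_le_mul_of_nonneg_left h1 hM
          linarith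
      _ = M * ((1 + δ ^ α) * r i ^ α) := by ring
      _ ≤ M * (C * (1 - δ) ^ α * r i ^ α) := by
          apply mul_le_mul_of_nonneg_left _ hM
          exact mul_le_mul_of_nonneg_right hkey hriα
      _ = C * M * ((1 - δ) ^ α * r i ^ α) := by ring
      _ = C * M * ((1 - δ) * r i) ^ α := by
          rw [Real.mul_rpow (by linarith) (hrpos i).le]
      _ ≤ C * M * ‖a - b‖ ^ α := by
          apply mul_le_mul_of_nonneg_left _ hCM
          exact Real.rpow_le_rpow (mul_nonneg (by linarith) (hrpos i).le) hsep hα0.le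
  -- estimate from x to a point
  have hx : ∀ k, ‖f x - f (x_k k)‖ ≤ C * M * ‖x - x_k k‖ ^ α := by
    intro k
    refine (hf k).trans ?_
    have h1 : (0:ℝ) ≤ ‖x - x_k k‖ ^ α := Real.rpow_nonneg (norm_nonneg _) α
    nlinarith [mul_nonneg (mul_nonneg (by linarith : (0:ℝ) ≤ C - 1) hM) h1]
  refine ⟨φ, strictMono_nat_of_lt_succ (fun i => (hφsucc i).1), ?_, ?_⟩
  · intro i j hij heq
    exact hij (hranti.injective (by simp only [hrdef, heq]))
  · have hzero : ∀ y : EuclideanSpace ℝ (Fin n),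
        ‖f y - f y‖ ≤ C * M * ‖y - y‖ ^ α := by
      intro y
      simp [Real.zero_rpow hα0.ne']
    intro y hy y' hy'
    rw [Set.mem_insert_iff, Set.mem_range] at hy hy'
    rcases hy with hy | ⟨i, hyi⟩ <;> rcases hy' with hy' | ⟨j, hyj⟩
    · rw [hy, hy']; exact hzero x
    · rw [hy, ← hyj]; exact hx (φ j)
    · rw [hy', ← hyi]
      simp only [Function.comp_apply]
      rw [norm_sub_rev, norm_sub_rev (x_k (φ i)) x]
      exact hx (φ i)
    · rw [← hyi, ← hyj]
      simp only [Function.comp_apply]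
      rcases lt_trichotomy i j with h | rfl | h
      · exact main i j h
      · exact hzero _
      · rw [norm_sub_rev, norm_sub_rev (x_k (φ i))]
        exact main j i h
end

section
/- Let n, m ≥ 1, let E ⊆ ℝ^n have positive Lebesgue outer measure, and let f : E → ℝ^m be a function such that for every x ∈ E there exists ρ(x) > 0 with the property that f(x) ≠ f(x') for every x' ∈ E with 0 < |x − x'| < ρ(x). Then there exists a subset E' ⊆ E of positive Lebesgue outer measure on which f is injective. -/
open MeasureTheory

/-- From local injectivity to injectivity on a positive-measure subset:
if `E ⊆ ℝⁿ` has positive Lebesgue outer measure and `f : E → ℝᵐ` is such that every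
`x ∈ E` has a radius `ρ(x) > 0` with `f(x) ≠ f(x')` for all `x' ∈ E` with
`0 < |x - x'| < ρ(x)`, then `f` is injective on some subset `E' ⊆ E` of positive
Lebesgue outer measure. -/
theorem injective_on_positive_measure_subset (n m : ℕ) (hn : 1 ≤ n) (hm : 1 ≤ m)
    (E : Set (EuclideanSpace ℝ (Fin n))) (hE : 0 < volume E)
    (f : EuclideanSpace ℝ (Fin n) → EuclideanSpace ℝ (Fin m))
    (hf : ∀ x ∈ E, ∃ ρ > (0 : ℝ), ∀ x' ∈ E, 0 < ‖x - x'‖ → ‖x - x'‖ < ρ → f x ≠ f x') :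
    ∃ E' ⊆ E, 0 < volume E' ∧ Set.InjOn f E' := by
  -- stratify by quantified radius 1/(k+1)
  set S : ℕ → Set (EuclideanSpace ℝ (Fin n)) := fun k =>
    {x ∈ E | ∀ x' ∈ E, 0 < ‖x - x'‖ → ‖x - x'‖ < 1 / (k + 1) → f x ≠ f x'} with hS
  have hEsub : E ⊆ ⋃ k, S k := by
    intro x hx
    obtain ⟨ρ, hρ, h⟩ := hf x hx
    obtain ⟨k, hk⟩ := exists_nat_one_div_lt hρ
    exact Set.mem_iUnion.2 ⟨k, hx, fun x' hx' h1 h2 => h x' hx' h1 (h2.trans hk)⟩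
  have hpos : ∃ k, 0 < volume (S k) := by
    by_contra h
    push_neg at h
    simp only [nonpos_iff_eq_zero] at h
    have : volume E = 0 := measure_mono_null hEsub (measure_iUnion_null h)
    simp [this] at hE
  obtain ⟨k, hk⟩ := hpos
  -- cover by balls of radius 1/(2(k+1)) around a countable dense set
  obtain ⟨D, hDc, hDd⟩ := TopologicalSpace.exists_countable_dense (EuclideanSpace ℝ (Fin n))
  set r : ℝ := 1 / (2 * (k + 1)) with hr
  have hrpos : 0 < r := by positivity
  have hcov : S k ⊆ ⋃ c ∈ D, S k ∩ Metric.ball c r := by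
    intro x hx
    obtain ⟨c, hcD, hc⟩ := Metric.mem_closure_iff.1 (hDd x) r hrpos
    exact Set.mem_biUnion hcD ⟨hx, Metric.mem_ball.2 hc⟩
  have hpos2 : ∃ c ∈ D, 0 < volume (S k ∩ Metric.ball c r) := by
    by_contra h
    push_neg at h
    simp only [nonpos_iff_eq_zero] at h
    have : volume (S k) = 0 :=
      measure_mono_null hcov ((measure_biUnion_null_iff hDc).2 h)
    simp [this] at hk
  obtain ⟨c, hcD, hc⟩ := hpos2
  refine ⟨S k ∩ Metric.ball c r, fun x hx => hx.1.1, hc, ?_⟩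
  intro x hx y hy hfxy
  by_contra hne
  have hdist : dist x y < 1 / (k + 1) := by
    calc dist x y ≤ dist x c + dist c y := dist_triangle x c y
    _ < r + r := by
        have h1 := Metric.mem_ball.1 hx.2
        have h2 := Metric.mem_ball.1 hy.2
        rw [dist_comm c y]; linarith
    _ = 1 / (k + 1) := by rw [hr]; field_simp; norm_num
  have hnorm : ‖x - y‖ = dist x y := by rw [dist_eq_norm]
  exact hx.1.2 y hy.1.1 (by rw [hnorm]; exact dist_pos.2 hne) (by rw [hnorm]; exact hdist) hfxy
end

section
/- Let m ≥ 1, let f : ℝ^m → ℝ^m be differentiable, let λ : ℝ^m → ℝ and r : ℝ^m → ℝ^m be functions, and let J ⊆ ℝ be a nondegenerate open interval. Assume: (i) for every v ∈ ℝ^m, r(v) ≠ 0 and the kernel of the linear map Df(v) − λ(v)·id on ℝ^m is contained in the span of r(v); (ii) λ is differentiable and linearly degenerate, i.e. Dλ(v)(r(v)) = 0 for all v; (iii) V : J → ℝ^m satisfies λ(V(ξ)) = ξ for all ξ ∈ J; (iv) there is a point ξ₀ ∈ J at which V is differentiable and at which the map ξ ↦ f(V(ξ)) − ξ·V(ξ)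 is differentiable with derivative equal to −V(ξ₀). Then a contradiction follows; i.e., no such V exists. -/
/-- Nonexistence of a differentiability point for a self-similar solution
with a linearly degenerate eigenvalue: let `f : ℝᵐ → ℝᵐ` be differentiable, `λ` a
differentiable eigenvalue with eigenvector field `r` such that `r(v) ≠ 0`, the kernel of
`Df(v) - λ(v)·id` is contained in the span of `r(v)`, and `Dλ(v)(r(v)) = 0` (linear
degeneracy). If `V : J → ℝᵐ` satisfies `λ(V(ξ)) = ξ` on a nondegenerate open interval `J`,
and at some `ξ₀ ∈ J` both `V` and `ξ ↦ f(V(ξ)) - ξ·V(ξ)` are differentiable with the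
latter having derivative `-V(ξ₀)` (i.e. the conservation law `(f(V) - ξV)_ξ = -V` holds at
`ξ₀`), then a contradiction follows. -/
theorem linearly_degenerate_contradiction (m : ℕ) (hm : 1 ≤ m)
    (f : EuclideanSpace ℝ (Fin m) → EuclideanSpace ℝ (Fin m)) (hf : Differentiable ℝ f)
    (lam : EuclideanSpace ℝ (Fin m) → ℝ) (hlam : Differentiable ℝ lam)
    (r : EuclideanSpace ℝ (Fin m) → EuclideanSpace ℝ (Fin m))
    (hr : ∀ v, r v ≠ 0)
    (hker : ∀ v w, fderiv ℝ f v w = lam v • w → ∃ c : ℝ, w = c • r v)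
    (hdeg : ∀ v, fderiv ℝ lam v (r v) = 0)
    (J : Set ℝ) (a b : ℝ) (hab : a < b) (hJ : J = Set.Ioo a b)
    (V : ℝ → EuclideanSpace ℝ (Fin m))
    (hV : ∀ ξ ∈ J, lam (V ξ) = ξ)
    (ξ₀ : ℝ) (hξ₀ : ξ₀ ∈ J)
    (hVdiff : DifferentiableAt ℝ V ξ₀)
    (heq : HasDerivAt (fun ξ => f (V ξ) - ξ • V ξ) (-(V ξ₀)) ξ₀) :
    False := by
  set v' := deriv V ξ₀ with hv'
  have hVd : HasDerivAt V v' ξ₀ := hVdiff.hasDerivAt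
  have hsm : HasDerivAt (fun ξ => ξ • V ξ) (ξ₀ • v' + (1:ℝ) • V ξ₀) ξ₀ :=
    (hasDerivAt_id ξ₀).smul hVd
  have hfV : HasDerivAt (fun ξ => f (V ξ)) (ξ₀ • v') ξ₀ := by
    have h : HasDerivAt (fun ξ => (f (V ξ) - ξ • V ξ) + ξ • V ξ) _ ξ₀ := heq.add hsm
    have hfun : (fun ξ => (f (V ξ) - ξ • V ξ) + ξ • V ξ) = fun ξ => f (V ξ) := by
      funext ξ; abel
    rw [hfun] at h
    convert h using 1
    module
  have hchain : HasDerivAt (fun ξ => f (V ξ)) (fderiv ℝ f (V ξ₀) v') ξ₀ :=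
    ((hf (V ξ₀)).hasFDerivAt).comp_hasDerivAt ξ₀ hVd
  have huniq : fderiv ℝ f (V ξ₀) v' = ξ₀ • v' := hchain.unique hfV
  have hlamV : lam (V ξ₀) = ξ₀ := hV ξ₀ hξ₀
  obtain ⟨c, hc⟩ := hker (V ξ₀) v' (by rw [huniq, hlamV])
  -- derivative of lam ∘ V at ξ₀ is 1
  have hlchain : HasDerivAt (fun ξ => lam (V ξ)) (fderiv ℝ lam (V ξ₀) v') ξ₀ :=
    ((hlam (V ξ₀)).hasFDerivAt).comp_hasDerivAt ξ₀ hVd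
  have hopen : IsOpen J := hJ ▸ isOpen_Ioo
  have hEq : (fun ξ => lam (V ξ)) =ᶠ[nhds ξ₀] id := by
    filter_upwards [hopen.mem_nhds hξ₀] with ξ hξ
    exact hV ξ hξ
  have hid : HasDerivAt (fun ξ => lam (V ξ)) 1 ξ₀ :=
    (hasDerivAt_id ξ₀).congr_of_eventuallyEq hEq
  have h1 : fderiv ℝ lam (V ξ₀) v' = 1 := hlchain.unique hid
  rw [hc, map_smul, hdeg, smul_zero] at h1
  exact one_ne_zero h1.symm
end
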